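/- arXiv:2311.15431 — 3 statements merged into one kernel-verified Lean document; each statement's English description precedes it below -/
import Mathlib

section
/- Let u be a nonempty word of length L over a finite alphabet A with alph(u) = A. Then there exists an integer p_u > 0 such that for every i ∈ ℕ and every integer p > 0, p is an arch-period of u starting at i if and only if p is a multiple of p_u. -/
variable {A : Type*}

/-- Simon's congruence of order `k`: `u` and `v` have the same subwords of length ≤ k. -/
def SimonCong (k : ℕ) (u v : List A) : Prop :=
  ∀ s : List A, s.length ≤ k → (s.Sublist u ↔ s.Sublist v)

/-- Subword distance `δ(u,v) = sup {k | u ∼ₖ v} ∈ ℕ∞`. -/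
noncomputable def sdelta (u v : List A) : ℕ∞ :=
  sSup {d : ℕ∞ | ∃ k : ℕ, d = k ∧ SimonCong k u v}

/-- Right side distance `r(u,t) = δ(u, u·t)`. -/
noncomputable def rdist (u t : List A) : ℕ∞ := sdelta u (u ++ t)

/-- Left side distance `ℓ(t,u) = δ(t·u, u)`. -/
noncomputable def ldist (t u : List A) : ℕ∞ := sdelta (t ++ u) u

/-- Piecewise complexity `h(u)`: least `n` such that any `v` with `u ∼ₙ v` equals `u`. -/
noncomputable def pcHeight (u : List A) : ℕ :=
  sInf {n : ℕ | ∀ v : List A, SimonCong n u v → v = u}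

/-- `u` is `m`-reduced: no strict subword of `u` is `∼ₘ`-equivalent to `u`. -/
def Reduced (m : ℕ) (u : List A) : Prop :=
  ∀ u' : List A, u'.Sublist u → u' ≠ u → ¬ SimonCong m u u'

/-- Piecewise minimality index `ρ(u)`: least `m` such that `u` is `m`-reduced. -/
noncomputable def pcRho (u : List A) : ℕ := sInf {m : ℕ | Reduced m u}

/-- An `A`-arch: contains every letter of `A` but no strict prefix does. -/
def IsArch (A : Type*) [Fintype A] (s : List A) : Prop :=
  (∀ a : A, a ∈ s) ∧ ∀ t : List A, t <+: s → t ≠ s → ∃ a : A, a ∉ t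

/-- The infinite periodic word `u^ω`. -/
def omegaWord (u : List A) (hu : u ≠ []) (i : ℕ) : A :=
  u.get ⟨i % u.length, Nat.mod_lt i (List.length_pos_iff.mpr hu)⟩

/-- The arch-jumping function `α` on `u^ω`: `α(i)` is the least `j > i` such that
every letter of `A` occurs among positions `i, …, j-1` of `u^ω`. -/
noncomputable def archJump (u : List A) (hu : u ≠ []) (i : ℕ) : ℕ :=
  sInf {j : ℕ | i < j ∧ ∀ a : A, ∃ m : ℕ, i ≤ m ∧ m < j ∧ omegaWord u hu m = a}

/-- `p` is an arch-period of `u` starting at `i`. -/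
def IsArchPeriodAt (u : List A) (hu : u ≠ []) (i p : ℕ) : Prop :=
  0 < p ∧ ∃ k : ℕ, (archJump u hu)^[k + p] i ≡ (archJump u hu)^[k] i [MOD u.length]

/-- The arch-period of `u`: the least arch-period starting at 0. -/
noncomputable def archPeriod (u : List A) (hu : u ≠ []) : ℕ :=
  sInf {p : ℕ | IsArchPeriodAt u hu 0 p}

/-- `K_u`: the least `k` with `α^{k+p}(0) ≡ α^k(0) (mod L)`. -/
noncomputable def archTransientIndex (u : List A) (hu : u ≠ []) : ℕ :=
  sInf {k : ℕ |
    (archJump u hu)^[k + archPeriod u hu] 0 ≡ (archJump u hu)^[k] 0 [MOD u.length]}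

/-- The transient `T_u = α^{K_u}(0)`. -/
noncomputable def archTransient (u : List A) (hu : u ≠ []) : ℕ :=
  (archJump u hu)^[archTransientIndex u hu] 0

/-- The span `Δ_u = α^{K_u+p_u}(0) − α^{K_u}(0)`. -/
noncomputable def archSpan (u : List A) (hu : u ≠ []) : ℕ :=
  (archJump u hu)^[archTransientIndex u hu + archPeriod u hu] 0 - archTransient u hu

/-- `u^n`: the `n`-fold concatenation of `u`. -/
def listPow (u : List A) (n : ℕ) : List A := (List.replicate n u).flatten

namespace ArchStmt16Aux

/-! ### Abstract dynamics of a monotone `L`-equivariant expanding map on `ℕ` -/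

variable {f : ℕ → ℕ} {L : ℕ}

lemma shift_mul (hshift : ∀ i, f (i + L) = f i + L) (i t : ℕ) :
    f (i + t * L) = f i + t * L := by
  induction t with
  | zero => simp
  | succ n ih =>
    have e : i + (n + 1) * L = (i + n * L) + L := by ring
    rw [e, hshift, ih]; ring

lemma iter_shift_mul (hshift : ∀ i, f (i + L) = f i + L) (k i t : ℕ) :
    f^[k] (i + t * L) = f^[k] i + t * L := by
  induction k generalizing i with
  | zero => simp
  | succ n ih =>
    rw [Function.iterate_succ_apply, Function.iterate_succ_apply,
      shift_mul hshift, ih]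

lemma cong (hshift : ∀ i, f (i + L) = f i + L) {a b : ℕ}
    (h : a ≡ b [MOD L]) : f a ≡ f b [MOD L] := by
  rcases Nat.le_total a b with hab | hab
  · obtain ⟨t, ht⟩ := (Nat.modEq_iff_dvd' hab).mp h
    have ht' : b - a = t * L := ht.trans (Nat.mul_comm L t)
    have hb : b = a + t * L := by omega
    rw [hb, shift_mul hshift]
    simp [Nat.ModEq, Nat.add_mul_mod_self_right]
  · obtain ⟨t, ht⟩ := (Nat.modEq_iff_dvd' hab).mp h.symm
    have ht' : a - b = t * L := ht.trans (Nat.mul_comm L t)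
    have hb : a = b + t * L := by omega
    rw [hb, shift_mul hshift]
    simp [Nat.ModEq, Nat.add_mul_mod_self_right]

lemma cong_iter (hshift : ∀ i, f (i + L) = f i + L) (k : ℕ) {a b : ℕ}
    (h : a ≡ b [MOD L]) : f^[k] a ≡ f^[k] b [MOD L] := by
  induction k with
  | zero => simpa
  | succ n ih =>
    rw [Function.iterate_succ_apply', Function.iterate_succ_apply']
    exact cong hshift ih

lemma self_le_iter (hlt : ∀ i, i < f i) (k i : ℕ) : i ≤ f^[k] i := by
  induction k with
  | zero => simp
  | succ n ih =>
    rw [Function.iterate_succ_apply']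
    exact le_trans ih (le_of_lt (hlt _))

/-- the set of (not-necessarily-positive) arch periods at `i` -/
def T (f : ℕ → ℕ) (L i : ℕ) : Set ℕ := {p | ∃ k, f^[k + p] i ≡ f^[k] i [MOD L]}

lemma propagate (hshift : ∀ i, f (i + L) = f i + L) {i p k k' : ℕ}
    (h : f^[k + p] i ≡ f^[k] i [MOD L]) (hk : k ≤ k') :
    f^[k' + p] i ≡ f^[k'] i [MOD L] := by
  have e1 : k' + p = (k' - k) + (k + p) := by omega
  have e2 : k' = (k' - k) + k := by omega
  rw [e1, Function.iterate_add_apply]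
  calc f^[k'-k] (f^[k+p] i) ≡ f^[k'-k] (f^[k] i) [MOD L] := cong_iter hshift _ h
    _ = f^[k'] i := by rw [← Function.iterate_add_apply, ← e2]

lemma T_add (hshift : ∀ i, f (i + L) = f i + L) {i p p' : ℕ}
    (hp : p ∈ T f L i) (hp' : p' ∈ T f L i) : p + p' ∈ T f L i := by
  obtain ⟨k1, h1⟩ := hp
  obtain ⟨k2, h2⟩ := hp'
  set K := max k1 k2
  refine ⟨K, ?_⟩
  have h1' := propagate hshift h1 (le_max_left k1 k2)
  have h3 : f^[(K + p) + p'] i ≡ f^[K + p] i [MOD L] :=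
    propagate hshift h2 (by omega)
  have e : K + (p + p') = (K + p) + p' := by omega
  rw [e]
  exact h3.trans h1'

lemma T_sub (hshift : ∀ i, f (i + L) = f i + L) {i p p' : ℕ} (hle : p' ≤ p)
    (hp : p ∈ T f L i) (hp' : p' ∈ T f L i) : p - p' ∈ T f L i := by
  obtain ⟨k1, h1⟩ := hp
  obtain ⟨k2, h2⟩ := hp'
  set K := max k1 k2
  refine ⟨K, ?_⟩
  have h1' := propagate hshift h1 (le_max_left k1 k2 : k1 ≤ K)
  have h2' : f^[(K + (p - p')) + p'] i ≡ f^[K + (p - p')] i [MOD L] :=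
    propagate hshift h2 (by omega)
  have e : (K + (p - p')) + p' = K + p := by omega
  rw [e] at h2'
  exact h2'.symm.trans h1'

lemma T_mod (hshift : ∀ i, f (i + L) = f i + L) {i q : ℕ}
    (hq : q ∈ T f L i) (hqpos : 0 < q) :
    ∀ p ∈ T f L i, p % q ∈ T f L i := by
  intro p hp
  induction p using Nat.strong_induction_on with
  | _ p ih =>
    rcases Nat.lt_or_ge p q with h | h
    · rwa [Nat.mod_eq_of_lt h]
    · have hsub := T_sub hshift h hp hq
      have e : (p - q) % q = p % q := by
        conv_rhs => rw [← Nat.sub_add_cancel h]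
        rw [Nat.add_mod_right]
      rw [← e]
      exact ih (p - q) (by omega) hsub

/-- the minimal positive period at `i` -/
noncomputable def q (f : ℕ → ℕ) (L i : ℕ) : ℕ := sInf {p | 0 < p ∧ p ∈ T f L i}

lemma T_nonempty (hL : 0 < L) (i : ℕ) :
    ∃ p, 0 < p ∧ p ∈ T f L i := by
  have hcard : Fintype.card (Fin L) < Fintype.card (Fin (L + 1)) := by simp
  obtain ⟨a, b, hne, heq⟩ := Fintype.exists_ne_map_eq_of_card_lt
    (fun k : Fin (L + 1) => (⟨f^[k] i % L, Nat.mod_lt _ hL⟩ : Fin L)) hcard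
  have heq' : f^[(a : ℕ)] i % L = f^[(b : ℕ)] i % L := congrArg Fin.val heq
  rcases Nat.lt_or_ge (a : ℕ) (b : ℕ) with h | h
  · refine ⟨(b : ℕ) - a, by omega, a, ?_⟩
    have e : (a : ℕ) + ((b : ℕ) - a) = b := by omega
    rw [e]; exact heq'.symm
  · have h' : (b : ℕ) < a := by
      rcases Nat.lt_or_ge (b : ℕ) (a : ℕ) with h2 | h2
      · exact h2
      · exact absurd (Fin.ext (le_antisymm h2 h)) hne
    refine ⟨(a : ℕ) - b, by omega, b, ?_⟩
    have e : (b : ℕ) + ((a : ℕ) - b) = a := by omega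
    rw [e]; exact heq'

lemma q_spec (hL : 0 < L) (i : ℕ) :
    0 < q f L i ∧ q f L i ∈ T f L i :=
  Nat.sInf_mem (T_nonempty hL i)

lemma mem_T_iff_dvd (hL : 0 < L) (hshift : ∀ i, f (i + L) = f i + L) (i p : ℕ) :
    p ∈ T f L i ↔ q f L i ∣ p := by
  obtain ⟨hqpos, hqT⟩ := q_spec (f := f) hL i
  constructor
  · intro hp
    have hmod := T_mod hshift hqT hqpos p hp
    by_contra hndvd
    have hmodpos : 0 < p % q f L i :=
      Nat.pos_of_ne_zero fun h0 => hndvd (Nat.dvd_of_mod_eq_zero h0)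
    have hlt : p % q f L i < q f L i := Nat.mod_lt _ hqpos
    have h5 : q f L i ≤ p % q f L i :=
      Nat.sInf_le (show p % q f L i ∈ {p | 0 < p ∧ p ∈ T f L i} from ⟨hmodpos, hmod⟩)
    omega
  · rintro ⟨c, rfl⟩
    induction c with
    | zero => exact ⟨0, by simp [Nat.ModEq]⟩
    | succ n ih =>
      have e : q f L i * (n + 1) = q f L i * n + q f L i := by ring
      rw [e]
      exact T_add hshift ih hqT

/-- linear growth along multiples of a period -/
lemma iterate_lin (hshift : ∀ i, f (i + L) = f i + L) {x qq a : ℕ}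
    (h : f^[qq] x = x + a * L) (N : ℕ) : f^[N * qq] x = x + (N * a) * L := by
  induction N with
  | zero => simp
  | succ n ih =>
    have e : (n + 1) * qq = qq + n * qq := by ring
    rw [e, Function.iterate_add_apply, ih, iter_shift_mul hshift, h]
    ring

lemma exists_lin (hlt : ∀ i, i < f i) {x qq : ℕ}
    (h : f^[qq] x ≡ x [MOD L]) : ∃ a, f^[qq] x = x + a * L := by
  have hle : x ≤ f^[qq] x := self_le_iter hlt qq x
  obtain ⟨t, ht⟩ := (Nat.modEq_iff_dvd' hle).mp h.symm
  have ht' : f^[qq] x - x = t * L := ht.trans (Nat.mul_comm L t)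
  exact ⟨t, by omega⟩

/-- equal rotation rates -/
lemma rate_le (hL : 0 < L) (hmono : Monotone f) (hshift : ∀ i, f (i + L) = f i + L)
    {x y a b qq r : ℕ}
    (hx : f^[qq] x = x + a * L) (hy : f^[r] y = y + b * L) :
    a * r ≤ b * qq := by
  by_contra hcon
  push_neg at hcon
  have hba : b * qq + 1 ≤ a * r := hcon
  have key : ∀ N : ℕ, x + (N * (a * r)) * L ≤ y + (N * (b * qq)) * L + x * L := by
    intro N
    have h1 : f^[(N * r) * qq] x = x + ((N * r) * a) * L := iterate_lin hshift hx _
    have h2 : f^[(N * qq) * r] y = y + ((N * qq) * b) * L := iterate_lin hshift hy _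
    have hxy : x ≤ y + x * L := by nlinarith
    have h3 : f^[(N * r) * qq] x ≤ f^[(N * r) * qq] (y + x * L) :=
      Monotone.iterate hmono _ hxy
    have h4 : f^[(N * r) * qq] (y + x * L) = f^[(N * r) * qq] y + x * L :=
      iter_shift_mul hshift _ _ _
    have e : (N * r) * qq = (N * qq) * r := by ring
    rw [h1, h4, e, h2] at h3
    have e1 : (N * r) * a = N * (a * r) := by ring
    have e2 : (N * qq) * b = N * (b * qq) := by ring
    rw [e1, e2] at h3
    exact h3
  set N := y + x * L + 1 with hN
  have expand := key N
  have m1 : N * (b * qq) + N ≤ N * (a * r) := by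
    have h5 := Nat.mul_le_mul_left N hba
    rw [Nat.mul_add, Nat.mul_one] at h5
    exact h5
  have m2 : (N * (b * qq)) * L + N * L ≤ (N * (a * r)) * L := by
    have h6 := Nat.mul_le_mul_right L m1
    rw [Nat.add_mul] at h6
    exact h6
  have m3 : N ≤ N * L := Nat.le_mul_of_pos_right N hL
  omega

/-- a periodic point of a monotone L-equivariant map is rigid -/
lemma step2 {F : ℕ → ℕ} (hmono : Monotone F)
    (hshift : ∀ z t, F (z + t * L) = F z + t * L)
    {x qq b : ℕ} (hq : 0 < qq) (h : F^[qq] x = x + (qq * b) * L) :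
    F x = x + b * L := by
  rcases Nat.eq_or_lt_of_le hq with hq1 | hq2
  · have hqe : qq = 1 := hq1.symm
    subst hqe
    simpa using h
  · -- qq ≥ 2
    set c : ℕ → ℕ := fun j => F^[j % qq] x + (qq - j % qq) * (b * L) with hc
    have hrec : ∀ j, F (c j) = c (j + 1) + b * L := by
      intro j
      have hs : j % qq < qq := Nat.mod_lt _ hq
      have h1 : F (c j) = F^[j % qq + 1] x + (qq - j % qq) * (b * L) := by
        rw [hc]
        simp only []
        have e : (qq - j % qq) * (b * L) = ((qq - j % qq) * b) * L := by ring
        rw [e, hshift, Function.iterate_succ_apply']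
      rcases Nat.lt_or_ge (j % qq + 1) qq with h2 | h2
      · have h1q : 1 % qq = 1 := Nat.mod_eq_of_lt (by omega)
        have e : (j + 1) % qq = j % qq + 1 := by
          rw [Nat.add_mod, h1q, Nat.mod_eq_of_lt h2]
        rw [h1, hc]
        simp only []
        rw [e]
        have e3 : (qq - j % qq) * (b * L) = (qq - (j % qq + 1)) * (b * L) + b * L := by
          have e4 : qq - j % qq = (qq - (j % qq + 1)) + 1 := by omega
          rw [e4]; ring
        rw [e3]; ring
      · have hjq : j % qq = qq - 1 := by omega
        have h1q : 1 % qq = 1 := Nat.mod_eq_of_lt (by omega)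
        have e : (j + 1) % qq = 0 := by
          rw [Nat.add_mod, h1q, hjq]
          have e5 : qq - 1 + 1 = qq := by omega
          rw [e5, Nat.mod_self]
        rw [h1, hc]
        simp only []
        rw [e, hjq]
        have e6 : qq - 1 + 1 = qq := by omega
        have e7 : qq - (qq - 1) = 1 := by omega
        rw [e6, e7, h]
        simp only [Nat.zero_mod, Function.iterate_zero_apply, Nat.sub_zero]
        ring
    have hperiodic : ∀ j, c j = c (j % qq) := by
      intro j
      rw [hc]
      simp only []
      rw [Nat.mod_eq_of_lt (Nat.mod_lt j hq)]
    obtain ⟨j0, hj0mem, hj0min⟩ :=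
      Finset.exists_min_image (Finset.range qq) c ⟨0, Finset.mem_range.mpr hq⟩
    have hj0lt : j0 < qq := Finset.mem_range.mp hj0mem
    have hmin : ∀ j, c j0 ≤ c j := by
      intro j
      rw [hperiodic j]
      exact hj0min _ (Finset.mem_range.mpr (Nat.mod_lt _ hq))
    have hpred : F (c (j0 + qq - 1)) = c j0 + b * L := by
      have hr := hrec (j0 + qq - 1)
      have e : j0 + qq - 1 + 1 = j0 + qq := by omega
      rw [e] at hr
      have e2 : c (j0 + qq) = c j0 := by
        rw [hperiodic (j0 + qq), Nat.add_mod_right, ← hperiodic j0]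
      rw [e2] at hr
      exact hr
    have hFm_le : F (c j0) ≤ c j0 + b * L := by
      rw [← hpred]
      exact hmono (hmin _)
    have hFm_ge : c j0 + b * L ≤ F (c j0) := by
      rw [hrec j0]
      have := hmin (j0 + 1)
      omega
    have hFm : F (c j0) = c j0 + b * L := le_antisymm hFm_le hFm_ge
    have hstep : ∀ j, c j = c j0 → c (j + 1) = c j0 := by
      intro j hj
      have hr := hrec j
      rw [hj, hFm] at hr
      omega
    have hall : ∀ t, c (j0 + t) = c j0 := by
      intro t
      induction t with
      | zero => rfl
      | succ n ih =>
        have h7 := hstep (j0 + n) ih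
        rw [← Nat.add_assoc]
        exact h7
    have hc0 : c 0 = c j0 := by
      have h8 := hall (qq - j0)
      have e : j0 + (qq - j0) = qq := by omega
      rw [e] at h8
      rw [← h8, hperiodic qq, Nat.mod_self]
    have hc1 : c 1 = c j0 := by
      have h9 := hall (qq + 1 - j0)
      have e : j0 + (qq + 1 - j0) = qq + 1 := by omega
      rw [e] at h9
      rw [← h9, hperiodic (qq + 1), Nat.add_mod_left, Nat.mod_eq_of_lt hq2]
    have e0 : c 0 = x + qq * (b * L) := by
      rw [hc]
      simp
    have e1 : c 1 = F x + (qq - 1) * (b * L) := by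
      rw [hc]
      simp only []
      rw [Nat.mod_eq_of_lt hq2, Function.iterate_one]
    have heq : F x + (qq - 1) * (b * L) = x + qq * (b * L) := by
      rw [← e1, ← e0, hc1, hc0]
    have efin : qq * (b * L) = (qq - 1) * (b * L) + b * L := by
      have e9 : qq = (qq - 1) + 1 := by omega
      rw [e9]
      have e10 : (qq - 1) + 1 - 1 = qq - 1 := by omega
      rw [e10]
      ring
    omega

/-- the minimal periods at any two starting points divide each other -/
lemma q_dvd (hL : 0 < L) (hmono : Monotone f)
    (hshift : ∀ i, f (i + L) = f i + L) (hlt : ∀ i, i < f i) (i j : ℕ) :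
    q f L i ∣ q f L j := by
  obtain ⟨hqi_pos, ki, hki⟩ := q_spec (f := f) hL i
  obtain ⟨hqj_pos, kj, hkj⟩ := q_spec (f := f) hL j
  set qi := q f L i
  set qj := q f L j
  set x := f^[ki] i with hx
  set y := f^[kj] j with hy
  have hx0 : f^[qi] x ≡ x [MOD L] := by
    rw [hx, ← Function.iterate_add_apply]
    rw [Nat.add_comm qi ki] at *
    exact hki
  have hy0 : f^[qj] y ≡ y [MOD L] := by
    rw [hy, ← Function.iterate_add_apply]
    rw [Nat.add_comm qj kj] at *
    exact hkj
  obtain ⟨a, ha⟩ := exists_lin hlt hx0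
  obtain ⟨b, hb⟩ := exists_lin hlt hy0
  have rate1 : a * qj ≤ b * qi := rate_le hL hmono hshift ha hb
  have rate2 : b * qi ≤ a * qj := rate_le hL hmono hshift hb ha
  have hab : a * qj = b * qi := le_antisymm rate1 rate2
  have hFiter : (f^[qj])^[qi] x = x + (qi * b) * L := by
    rw [← Function.iterate_mul]
    have h1 : f^[qj * qi] x = x + (qj * a) * L := by
      have := iterate_lin hshift ha qj
      exact this
    rw [h1]
    congr 2
    rw [Nat.mul_comm qj a, hab, Nat.mul_comm b qi]
  have hF : f^[qj] x = x + b * L :=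
    step2 (hmono.iterate qj) (fun z t => iter_shift_mul hshift qj z t) hqi_pos hFiter
  have hcong : f^[qj] x ≡ x [MOD L] := by
    rw [hF]
    simp [Nat.ModEq, Nat.add_mul_mod_self_right]
  have hmem : qj ∈ T f L i := by
    refine ⟨ki, ?_⟩
    rw [Nat.add_comm ki qj, Function.iterate_add_apply]
    exact hcong
  exact (mem_T_iff_dvd hL hshift i qj).mp hmem

end ArchStmt16Aux

namespace ArchStmt16Aux

section Concrete

variable {A : Type*} [Fintype A]

lemma exists_mod_eq {L t : ℕ} (hL : 0 < L) (ht : t < L) (i : ℕ) :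
    ∃ m, i ≤ m ∧ m < i + L ∧ m % L = t := by
  induction i with
  | zero => exact ⟨t, Nat.zero_le _, by omega, Nat.mod_eq_of_lt ht⟩
  | succ n ih =>
    obtain ⟨m, h1, h2, h3⟩ := ih
    rcases Nat.lt_or_ge n m with h | h
    · exact ⟨m, h, by omega, h3⟩
    · exact ⟨m + L, by omega, by omega, by rwa [Nat.add_mod_right]⟩

lemma omegaWord_eq_get (u : List A) (hu : u ≠ []) (m t : ℕ) (ht : t < u.length)
    (h : m % u.length = t) : omegaWord u hu m = u.get ⟨t, ht⟩ := by
  simp only [omegaWord]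
  congr 1
  exact Fin.ext h

lemma omegaWord_add (u : List A) (hu : u ≠ []) (m : ℕ) :
    omegaWord u hu (m + u.length) = omegaWord u hu m := by
  simp only [omegaWord]
  congr 1
  exact Fin.ext (Nat.add_mod_right m _)

/-- the defining set used in `archJump` -/
def JSet (u : List A) (hu : u ≠ []) (i : ℕ) : Set ℕ :=
  {j : ℕ | i < j ∧ ∀ a : A, ∃ m : ℕ, i ≤ m ∧ m < j ∧ omegaWord u hu m = a}

lemma JSet_mem (u : List A) (hu : u ≠ []) (hA : ∀ a : A, a ∈ u) (i : ℕ) :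
    i + u.length ∈ JSet u hu i := by
  have hL : 0 < u.length := List.length_pos_iff.mpr hu
  constructor
  · omega
  · intro a
    obtain ⟨t, hta⟩ := List.mem_iff_get.mp (hA a)
    obtain ⟨m, h1, h2, h3⟩ := exists_mod_eq hL t.isLt i
    refine ⟨m, h1, h2, ?_⟩
    rw [omegaWord_eq_get u hu m t t.isLt h3, ← hta]

lemma archJump_spec (u : List A) (hu : u ≠ []) (hA : ∀ a : A, a ∈ u) (i : ℕ) :
    archJump u hu i ∈ JSet u hu i :=
  Nat.sInf_mem ⟨i + u.length, JSet_mem u hu hA i⟩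

lemma archJump_lt (u : List A) (hu : u ≠ []) (hA : ∀ a : A, a ∈ u) (i : ℕ) :
    i < archJump u hu i := (archJump_spec u hu hA i).1

lemma archJump_mono (u : List A) (hu : u ≠ []) (hA : ∀ a : A, a ∈ u) :
    Monotone (archJump u hu) := by
  intro i j hij
  obtain ⟨hj1, hj2⟩ := archJump_spec u hu hA j
  exact Nat.sInf_le ⟨by omega, fun a => by
    obtain ⟨m, h1, h2, h3⟩ := hj2 a
    exact ⟨m, by omega, h2, h3⟩⟩

lemma archJump_shift (u : List A) (hu : u ≠ []) (hA : ∀ a : A, a ∈ u) (i : ℕ) :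
    archJump u hu (i + u.length) = archJump u hu i + u.length := by
  set L := u.length with hLdef
  have hL : 0 < L := List.length_pos_iff.mpr hu
  apply le_antisymm
  · -- archJump (i+L) ≤ archJump i + L
    obtain ⟨h1, h2⟩ := archJump_spec u hu hA i
    refine Nat.sInf_le ⟨by omega, fun a => ?_⟩
    obtain ⟨m, hm1, hm2, hm3⟩ := h2 a
    exact ⟨m + L, by omega, by omega, by rw [omegaWord_add u hu m]; exact hm3⟩
  · -- archJump i + L ≤ archJump (i+L)
    obtain ⟨h1, h2⟩ := archJump_spec u hu hA (i + L)
    set J := archJump u hu (i + L) with hJ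
    have hJmem : J - L ∈ JSet u hu i := by
      constructor
      · omega
      · intro a
        obtain ⟨m, hm1, hm2, hm3⟩ := h2 a
        refine ⟨m - L, by omega, by omega, ?_⟩
        have e : (m - L) + L = m := by omega
        have h4 := omegaWord_add u hu (m - L)
        rw [e] at h4
        rw [← h4]
        exact hm3
    have := Nat.sInf_le hJmem
    have hle : archJump u hu i ≤ J - L := this
    omega

end Concrete

end ArchStmt16Aux

/-- existence of the arch-period `p_u`: for every starting point `i`,
the arch-periods starting at `i` are exactly the positive multiples of `p_u`. -/
theorem stmt16 {A : Type*} [Fintype A] (u : List A) (hu : u ≠ [])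
    (hA : ∀ a : A, a ∈ u) :
    ∃ pu : ℕ, 0 < pu ∧ ∀ i p : ℕ, 0 < p →
      (IsArchPeriodAt u hu i p ↔ pu ∣ p) := by
  classical
  set f := archJump u hu with hf
  set L := u.length with hLdef
  have hL : 0 < L := List.length_pos_iff.mpr hu
  have hlt : ∀ i, i < f i := fun i => ArchStmt16Aux.archJump_lt u hu hA i
  have hmono : Monotone f := ArchStmt16Aux.archJump_mono u hu hA
  have hshift : ∀ i, f (i + L) = f i + L := fun i =>
    ArchStmt16Aux.archJump_shift u hu hA i
  refine ⟨ArchStmt16Aux.q f L 0, (ArchStmt16Aux.q_spec hL 0).1, ?_⟩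
  intro i p hp
  have hqi : ArchStmt16Aux.q f L i = ArchStmt16Aux.q f L 0 :=
    Nat.dvd_antisymm (ArchStmt16Aux.q_dvd hL hmono hshift hlt i 0)
      (ArchStmt16Aux.q_dvd hL hmono hshift hlt 0 i)
  constructor
  · rintro ⟨-, k, hk⟩
    have hmem : p ∈ ArchStmt16Aux.T f L i := ⟨k, hk⟩
    rw [← hqi]
    exact (ArchStmt16Aux.mem_T_iff_dvd hL hshift i p).mp hmem
  · intro hdvd
    refine ⟨hp, ?_⟩
    have hdvd' : ArchStmt16Aux.q f L i ∣ p := by rw [hqi]; exact hdvd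
    exact (ArchStmt16Aux.mem_T_iff_dvd hL hshift i p).mpr hdvd'
end

section
/- Let u be a nonempty word over a finite alphabet A with alph(u) = A, and let p_u denote its arch-period. If v = u₂·u₁ is a conjugate of u (where u = u₁·u₂), then p_v = p_u; and if v = uᴿ is the reversal of u, then p_v = p_u. -/
variable {A : Type*}

namespace Stmt17


structure Adm (L : ℕ) (F : ℤ → ℤ) : Prop where
  mono : Monotone F
  ge : ∀ x, x ≤ F x
  le : ∀ x, F x ≤ x + L
  shift : ∀ x, F (x + L) = F x + L

variable {L : ℕ} {F G : ℤ → ℤ}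

lemma Adm.shift_int (hF : Adm L F) (t x : ℤ) : F (x + t * L) = F x + t * L := by
  induction t using Int.induction_on with
  | zero => simp
  | succ n ih =>
      have h1 := hF.shift (x + (n : ℤ) * L)
      have : x + ((n : ℤ) + 1) * L = x + (n : ℤ) * L + L := by ring
      rw [this, h1, ih]; ring
  | pred n ih =>
      have h1 := hF.shift (x + (-(n : ℤ) - 1) * L)
      have : x + (-(n : ℤ) - 1) * L + L = x + (-(n : ℤ)) * L := by ring
      rw [this] at h1
      have := ih
      omega

lemma Adm.iter_shift (hF : Adm L F) (n : ℕ) (t x : ℤ) :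
    F^[n] (x + t * L) = F^[n] x + t * L := by
  induction n generalizing x with
  | zero => simp
  | succ n ih =>
      rw [Function.iterate_succ_apply, hF.shift_int, Function.iterate_succ_apply, ih]

lemma Adm.le_iter (hF : Adm L F) (n : ℕ) (x : ℤ) : x ≤ F^[n] x := by
  induction n generalizing x with
  | zero => simp
  | succ n ih =>
      rw [Function.iterate_succ_apply']
      have h1 := ih x
      have h2 := hF.ge (F^[n] x)
      omega

lemma Adm.iter_le (hF : Adm L F) (n : ℕ) (x : ℤ) : F^[n] x ≤ x + n * L := by
  induction n generalizing x with
  | zero => simp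
  | succ n ih =>
      rw [Function.iterate_succ_apply']
      have h1 := ih x
      have h2 := hF.le (F^[n] x)
      have h3 : ((n : ℤ) + 1) * L = (n : ℤ) * L + L := by ring
      push_cast
      omega

/-- Exact orbit growth from a single-period equality. -/
lemma Adm.iter_period (hF : Adm L F) {p c : ℕ} {y : ℤ}
    (h : F^[p] y = y + c * L) (N : ℕ) : F^[N * p] y = y + (N * c) * L := by
  induction N with
  | zero => simp
  | succ N ih =>
      have : (N + 1) * p = p + N * p := by ring
      rw [this, Function.iterate_add_apply, ih]
      have := hF.iter_shift p ((N : ℤ) * c) y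
      rw [show y + ((N:ℤ)*c)*L = y + (N*c : ℤ)*L by push_cast; ring] at this
      rw [this, h]
      push_cast; ring

def PerSet (L : ℕ) (F : ℤ → ℤ) (x : ℤ) : Set ℕ :=
  {p | 0 < p ∧ ∃ k, (L : ℤ) ∣ F^[k + p] x - F^[k] x}

noncomputable def minPer (L : ℕ) (F : ℤ → ℤ) (x : ℤ) : ℕ := sInf (PerSet L F x)

lemma PerSet.nonempty (hF : Adm L F) (hL : 0 < L) (x : ℤ) : (PerSet L F x).Nonempty := by
  have hmap : ∀ k : ℕ, 0 ≤ F^[k] x % L ∧ F^[k] x % L < L := fun k =>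
    ⟨Int.emod_nonneg _ (by exact_mod_cast hL.ne'), Int.emod_lt_of_pos _ (by exact_mod_cast hL)⟩
  obtain ⟨a, b, hab, hfab⟩ := Fintype.exists_ne_map_eq_of_card_lt
    (fun k : Fin (L + 1) => (⟨(F^[(k : ℕ)] x % L).toNat, by
      have := hmap (k : ℕ); omega⟩ : Fin L)) (by simp)
  have hmod : F^[(a : ℕ)] x % L = F^[(b : ℕ)] x % L := by
    have := congrArg (fun z : Fin L => (z : ℤ)) hfab
    simp only [Fin.val_mk] at this
    have ha := hmap (a : ℕ); have hb := hmap (b : ℕ)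
    omega
  rcases lt_or_gt_of_ne (fun h : (a:ℕ) = (b:ℕ) => hab (Fin.ext h)) with h | h
  · exact ⟨(b : ℕ) - (a : ℕ), by omega, (a : ℕ), by
      rw [show (a : ℕ) + ((b:ℕ) - (a:ℕ)) = (b:ℕ) by omega]
      exact Int.ModEq.dvd hmod⟩
  · exact ⟨(a : ℕ) - (b : ℕ), by omega, (b : ℕ), by
      rw [show (b : ℕ) + ((a:ℕ) - (b:ℕ)) = (a:ℕ) by omega]
      exact Int.ModEq.dvd hmod.symm⟩

lemma minPer_mem (hF : Adm L F) (hL : 0 < L) (x : ℤ) :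
    minPer L F x ∈ PerSet L F x := Nat.sInf_mem (PerSet.nonempty hF hL x)

lemma minPer_pos (hF : Adm L F) (hL : 0 < L) (x : ℤ) : 0 < minPer L F x :=
  (minPer_mem hF hL x).1

/-- From membership, extract an exact equality with a positive coefficient. -/
lemma exists_exact (hF : Adm L F) (hL : 0 < L) {x : ℤ} {p : ℕ} (hp : p ∈ PerSet L F x) :
    ∃ (k c : ℕ), c ≤ p ∧ F^[k + p] x = F^[k] x + c * L := by
  obtain ⟨hp0, k, hdvd⟩ := hp
  have hexp : F^[k + p] x = F^[p] (F^[k] x) := by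
    rw [add_comm, Function.iterate_add_apply]
  have hge : F^[k] x ≤ F^[k + p] x := by rw [hexp]; exact hF.le_iter p _
  have hle : F^[k + p] x ≤ F^[k] x + p * L := by rw [hexp]; exact hF.iter_le p _
  obtain ⟨c, hc⟩ := hdvd
  have hL' : (0 : ℤ) < L := by exact_mod_cast hL
  have hcpos : 0 ≤ c := by
    by_contra hcon
    push_neg at hcon
    have : (L : ℤ) * c < 0 := mul_neg_of_pos_of_neg hL' hcon
    omega
  have hcp : c ≤ p := by
    have h1 : (L : ℤ) * c ≤ (L : ℤ) * p := by
      have : (p : ℤ) * L = (L : ℤ) * p := by ring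
      omega
    exact_mod_cast le_of_mul_le_mul_left h1 hL'
  refine ⟨k, c.toNat, by omega, ?_⟩
  have hct : (c.toNat : ℤ) = c := by omega
  rw [hct]
  have : (L : ℤ) * c = c * L := by ring
  omega

/-- If an orbit of `y` grows at least at rate `e` per `s*q` steps, while `z` is
`(q, c')`-periodic, then `e ≤ s * c'`. -/
lemma grow_le (hG : Adm L G) (hL : 0 < L) {z : ℤ} {q c' : ℕ}
    (hz : G^[q] z = z + c' * L) (y : ℤ) (e s : ℕ)
    (H : ∀ N : ℕ, y + N * (e * L) ≤ G^[N * (s * q)] y) : e ≤ s * c' := by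
  by_contra hcon
  push_neg at hcon
  have hL' : (0 : ℤ) < L := by exact_mod_cast hL
  have hN1 : ((s : ℤ) * c' + 1) ≤ e := by exact_mod_cast hcon
  set t : ℕ := (y - z).toNat with ht
  have hyz : y ≤ z + t * L := by
    have h1 : (y - z : ℤ) ≤ t := Int.self_le_toNat _
    have h2 : (t : ℤ) * 1 ≤ t * L := by
      apply mul_le_mul_of_nonneg_left _ (by positivity)
      exact_mod_cast hL
    linarith
  have horb : ∀ N : ℕ, G^[N * (s * q)] z = z + (N * s * c') * L := by
    intro N
    have := hG.iter_period hz (N * s)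
    rw [show N * s * q = N * (s * q) by ring] at this
    exact this
  have hbound : ∀ N : ℕ, y + N * (e * L) ≤ z + (N * s * c') * L + t * L := by
    intro N
    calc y + N * (e * L) ≤ G^[N * (s * q)] y := H N
    _ ≤ G^[N * (s * q)] (z + t * L) := (hG.mono.iterate _) hyz
    _ = G^[N * (s * q)] z + t * L := hG.iter_shift _ _ _
    _ = z + (N * s * c') * L + t * L := by rw [horb N]
  set N : ℕ := (z + t * L - y).toNat + 1 with hN
  have hN0 : (0 : ℤ) ≤ (N : ℤ) := by positivity
  have h2 := hbound N
  have h3 : (N : ℤ) * (s * c' * L) + N * L ≤ N * (e * L) := by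
    have hstep : ((s : ℤ) * c' + 1) * L ≤ e * L :=
      mul_le_mul_of_nonneg_right hN1 hL'.le
    nlinarith [mul_le_mul_of_nonneg_left hstep hN0]
  have h5 : z + (t : ℤ) * L - y < N := by
    have := Int.self_le_toNat (z + t * L - y)
    push_cast [hN]
    omega
  have h6 : (N : ℤ) ≤ N * L := by
    nlinarith [show (1 : ℤ) ≤ (L : ℤ) from by exact_mod_cast hL]
  linarith

lemma shrink_le (hG : Adm L G) (hL : 0 < L) {z : ℤ} {q c' : ℕ}
    (hz : G^[q] z = z + c' * L) (y : ℤ) (e s : ℕ)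
    (H : ∀ N : ℕ, G^[N * (s * q)] y ≤ y + N * (e * L)) : s * c' ≤ e := by
  by_contra hcon
  push_neg at hcon
  have hL' : (0 : ℤ) < L := by exact_mod_cast hL
  have hN1 : ((e : ℤ) + 1) ≤ s * c' := by exact_mod_cast hcon
  set t : ℕ := (z - y).toNat with ht
  have hzy : z ≤ y + t * L := by
    have h1 : (z - y : ℤ) ≤ t := Int.self_le_toNat _
    have h2 : (t : ℤ) * 1 ≤ t * L := by
      apply mul_le_mul_of_nonneg_left _ (by positivity)
      exact_mod_cast hL
    linarith
  have horb : ∀ N : ℕ, G^[N * (s * q)] z = z + (N * s * c') * L := by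
    intro N
    have := hG.iter_period hz (N * s)
    rw [show N * s * q = N * (s * q) by ring] at this
    exact this
  have hbound : ∀ N : ℕ, z + (N * s * c') * L ≤ y + t * L + N * (e * L) := by
    intro N
    calc z + (N * s * c') * L = G^[N * (s * q)] z := (horb N).symm
    _ ≤ G^[N * (s * q)] (y + t * L) := (hG.mono.iterate _) hzy
    _ = G^[N * (s * q)] y + t * L := hG.iter_shift _ _ _
    _ ≤ y + N * (e * L) + t * L := by have := H N; linarith
    _ = y + t * L + N * (e * L) := by ring
  set N : ℕ := (y + t * L - z).toNat + 1 with hN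
  have hN0 : (0 : ℤ) ≤ (N : ℤ) := by positivity
  have h2 := hbound N
  have h3 : (N : ℤ) * (e * L) + N * L ≤ N * (s * c' * L) := by
    have hstep : ((e : ℤ) + 1) * L ≤ s * c' * L :=
      mul_le_mul_of_nonneg_right hN1 hL'.le
    nlinarith [mul_le_mul_of_nonneg_left hstep hN0]
  have h5 : y + (t : ℤ) * L - z < N := by
    have := Int.self_le_toNat (y + t * L - z)
    push_cast [hN]
    omega
  have h6 : (N : ℤ) ≤ N * L := by
    nlinarith [show (1 : ℤ) ≤ (L : ℤ) from by exact_mod_cast hL]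
  linarith

/-- For the minimal period `p`, there is exact periodic data with coefficient coprime to `p`. -/
lemma minPer_data (hF : Adm L F) (hL : 0 < L) (x : ℤ) :
    ∃ (k c : ℕ), c ≤ minPer L F x ∧
      F^[minPer L F x] (F^[k] x) = F^[k] x + c * L ∧ Nat.Coprime c (minPer L F x) := by
  set p := minPer L F x with hp
  obtain ⟨k, c, hcp, heq⟩ := exists_exact hF hL (minPer_mem hF hL x)
  have heq' : F^[p] (F^[k] x) = F^[k] x + c * L := by
    rw [← Function.iterate_add_apply, add_comm]; exact heq
  refine ⟨k, c, hcp, heq', ?_⟩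
  set g := Nat.gcd c p with hg
  have hp0 : 0 < p := minPer_pos hF hL x
  have hg0 : 0 < g := Nat.gcd_pos_of_pos_right _ hp0
  set b := p / g with hb
  set a := c / g with ha
  have hbg : b * g = p := Nat.div_mul_cancel (Nat.gcd_dvd_right c p)
  have hag : a * g = c := Nat.div_mul_cancel (Nat.gcd_dvd_left c p)
  have hb0 : 0 < b := by
    rcases Nat.eq_zero_or_pos b with h | h
    · rw [h] at hbg; omega
    · exact h
  set y := F^[k] x with hy
  have hgb : g * b = p := by rw [← hbg]; ring
  have hga : (g : ℤ) * a = c := by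
    have : g * a = c := by rw [Nat.mul_comm]; exact hag
    exact_mod_cast this
  have hfin : F^[g * b] y = y + (g : ℤ) * a * L := by
    rw [hgb, heq', ← hga]
  -- key claim: F^[b] y = y + a * L
  have hkey : F^[b] y = y + a * L := by
    rcases lt_trichotomy (F^[b] y) (y + a * L) with h | h | h
    · exfalso
      have hstep : ∀ m : ℕ, 0 < m → F^[m * b] y ≤ y + (m : ℤ) * a * L - 1 := by
        intro m hm
        induction m with
        | zero => omega
        | succ m ih =>
            rcases Nat.eq_zero_or_pos m with hm0 | hm0
            · subst hm0
              rw [show (0 + 1) * b = b from by ring]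
              push_cast
              linarith
            · have ihm := ih hm0
              have hrw : F^[(m + 1) * b] y = F^[b] (F^[m * b] y) := by
                rw [show (m + 1) * b = b + m * b by ring, Function.iterate_add_apply]
              rw [hrw]
              have h1 : F^[b] (F^[m * b] y) ≤ F^[b] (y + (m : ℤ) * a * L) := by
                apply hF.mono.iterate
                linarith
              have h2 : F^[b] (y + (m : ℤ) * a * L) = F^[b] y + (m : ℤ) * a * L :=
                hF.iter_shift b ((m : ℤ) * a) y
              push_cast
              linarith
      have hgfinal := hstep g hg0
      rw [hfin] at hgfinal
      linarith
    · exact h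
    · exfalso
      have hstep : ∀ m : ℕ, 0 < m → y + (m : ℤ) * a * L + 1 ≤ F^[m * b] y := by
        intro m hm
        induction m with
        | zero => omega
        | succ m ih =>
            rcases Nat.eq_zero_or_pos m with hm0 | hm0
            · subst hm0
              rw [show (0 + 1) * b = b from by ring]
              push_cast
              linarith
            · have ihm := ih hm0
              have hrw : F^[(m + 1) * b] y = F^[b] (F^[m * b] y) := by
                rw [show (m + 1) * b = b + m * b by ring, Function.iterate_add_apply]
              rw [hrw]
              have h1 : F^[b] (y + (m : ℤ) * a * L) ≤ F^[b] (F^[m * b] y) := by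
                apply hF.mono.iterate
                linarith
              have h2 : F^[b] (y + (m : ℤ) * a * L) = F^[b] y + (m : ℤ) * a * L :=
                hF.iter_shift b ((m : ℤ) * a) y
              push_cast
              linarith
      have hgfinal := hstep g hg0
      rw [hfin] at hgfinal
      linarith
  -- b is a period, so p ≤ b, forcing g = 1
  have hbmem : b ∈ PerSet L F x := by
    refine ⟨hb0, k, ?_⟩
    have hrw : F^[k + b] x = F^[b] y := by
      rw [add_comm, Function.iterate_add_apply]
    rw [hrw, hkey]
    exact ⟨a, by push_cast; ring⟩
  have hple : p ≤ b := Nat.sInf_le hbmem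
  have : g = 1 := by
    by_contra hgne
    have hg2 : 2 ≤ g := by omega
    nlinarith [hbg]
  exact this

/-- The minimal period is independent of the starting point. -/
lemma minPer_indep (hF : Adm L F) (hL : 0 < L) (x₁ x₂ : ℤ) :
    minPer L F x₁ = minPer L F x₂ := by
  obtain ⟨k₁, c, hcp, heq₁, hcop₁⟩ := minPer_data hF hL x₁
  obtain ⟨k₂, c', hcp', heq₂, hcop₂⟩ := minPer_data hF hL x₂
  set p := minPer L F x₁
  set q := minPer L F x₂
  set y := F^[k₁] x₁
  set z := F^[k₂] x₂
  have hp0 : 0 < p := minPer_pos hF hL x₁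
  have hq0 : 0 < q := minPer_pos hF hL x₂
  have hyN : ∀ N : ℕ, F^[N * (p * q)] y = y + (N * (q * c)) * L := by
    intro N
    have := hF.iter_period heq₁ (N * q)
    rw [show N * q * p = N * (p * q) by ring] at this
    rw [this]; push_cast; ring_nf
  have h1 : q * c ≤ p * c' := by
    apply grow_le hF hL heq₂ y (q * c) p
    intro N
    rw [hyN N]
    push_cast
    exact le_of_eq (by ring)
  have h2 : p * c' ≤ q * c := by
    have hzN : ∀ N : ℕ, F^[N * (q * p)] z = z + (N * (p * c')) * L := by
      intro N
      have := hF.iter_period heq₂ (N * p)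
      rw [show N * p * q = N * (q * p) by ring] at this
      rw [this]; push_cast; ring_nf
    apply grow_le hF hL heq₁ z (p * c') q
    intro N
    rw [hzN N]
    push_cast
    exact le_of_eq (by ring)
  have heqc : q * c = p * c' := le_antisymm h1 h2
  have hpq : p ∣ q := (Nat.Coprime.dvd_of_dvd_mul_right (hcop₁.symm)
    (by rw [heqc]; exact ⟨c', rfl⟩))
  have hqp : q ∣ p := (Nat.Coprime.dvd_of_dvd_mul_right (hcop₂.symm)
    (by rw [← heqc]; exact ⟨c, rfl⟩))
  exact Nat.dvd_antisymm hpq hqp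

/-- Adjoint coupling: minimal periods of `F` and `G` agree. -/
lemma minPer_adjoint (hF : Adm L F) (hG : Adm L G) (hL : 0 < L)
    (h1 : ∀ x, x + L ≤ G (F x)) (h2 : ∀ x, F (G x) ≤ x + L) (x₁ x₂ : ℤ) :
    minPer L F x₁ = minPer L G x₂ := by
  have c1 : ∀ (n : ℕ) (x : ℤ), x + (n : ℤ) * L ≤ G^[n] (F^[n] x) := by
    intro n
    induction n with
    | zero => simp
    | succ n ih =>
        intro x
        have hr1 : F^[n + 1] x = F (F^[n] x) := Function.iterate_succ_apply' F n x
        have hr2 : G^[n + 1] (F (F^[n] x)) = G^[n] (G (F (F^[n] x))) :=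
          Function.iterate_succ_apply G n _
        rw [hr1, hr2]
        have ha := h1 (F^[n] x)
        have hb : G^[n] (F^[n] x + (1 : ℤ) * L) ≤ G^[n] (G (F (F^[n] x))) := by
          apply hG.mono.iterate
          linarith
        have hc : G^[n] (F^[n] x + (1 : ℤ) * L) = G^[n] (F^[n] x) + (1 : ℤ) * L :=
          hG.iter_shift n 1 (F^[n] x)
        have hd := ih x
        push_cast
        linarith
  have c2 : ∀ (n : ℕ) (x : ℤ), F^[n] (G^[n] x) ≤ x + (n : ℤ) * L := by
    intro n
    induction n with
    | zero => simp
    | succ n ih =>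
        intro x
        have hr1 : G^[n + 1] x = G (G^[n] x) := Function.iterate_succ_apply' G n x
        have hr2 : F^[n + 1] (G (G^[n] x)) = F^[n] (F (G (G^[n] x))) :=
          Function.iterate_succ_apply F n _
        rw [hr1, hr2]
        have ha := h2 (G^[n] x)
        have hb : F^[n] (F (G (G^[n] x))) ≤ F^[n] (G^[n] x + (1 : ℤ) * L) := by
          apply hF.mono.iterate
          linarith
        have hc : F^[n] (G^[n] x + (1 : ℤ) * L) = F^[n] (G^[n] x) + (1 : ℤ) * L :=
          hF.iter_shift n 1 (G^[n] x)
        have hd := ih x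
        push_cast
        linarith
  obtain ⟨k₁, c, hcp, heq₁, hcop₁⟩ := minPer_data hF hL x₁
  obtain ⟨k₂, c', hcp', heq₂, hcop₂⟩ := minPer_data hG hL x₂
  set p := minPer L F x₁ with hpdef
  set q := minPer L G x₂ with hqdef
  set y := F^[k₁] x₁ with hy
  set z := G^[k₂] x₂ with hz
  have hp0 : 0 < p := minPer_pos hF hL x₁
  have hq0 : 0 < q := minPer_pos hG hL x₂
  have hyN : ∀ N : ℕ, F^[N * (p * q)] y = y + ((N * (q * c) : ℕ) : ℤ) * L := by
    intro N
    have := hF.iter_period heq₁ (N * q)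
    rw [show N * q * p = N * (p * q) by ring] at this
    rw [this]
    push_cast
    ring
  have hzN : ∀ N : ℕ, G^[N * (q * p)] z = z + ((N * (p * c') : ℕ) : ℤ) * L := by
    intro N
    have := hG.iter_period heq₂ (N * p)
    rw [show N * p * q = N * (q * p) by ring] at this
    rw [this]
    push_cast
    ring
  -- Step A: q * (p - c) ≤ p * c'
  have hA : q * (p - c) ≤ p * c' := by
    apply grow_le hG hL heq₂ y (q * (p - c)) p
    intro N
    have hcoup := c1 (N * (p * q)) y
    rw [hyN N] at hcoup
    have hshift : G^[N * (p * q)] (y + ((N * (q * c) : ℕ) : ℤ) * L)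
        = G^[N * (p * q)] y + ((N * (q * c) : ℕ) : ℤ) * L :=
      hG.iter_shift _ _ _
    rw [hshift] at hcoup
    have hc_le : c ≤ p := hcp
    have hcast : ((q * (p - c) : ℕ) : ℤ) = (q : ℤ) * p - q * c := by
      push_cast [Nat.cast_sub hc_le]
      ring
    push_cast [hcast] at hcoup ⊢
    nlinarith [hcoup]
  -- Step B: q * c ≤ p * (q - c')
  have hB : q * c ≤ p * (q - c') := by
    apply shrink_le hF hL heq₁ z (p * (q - c')) q
    intro N
    have hcoup := c2 (N * (q * p)) z
    rw [hzN N] at hcoup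
    have hshift : F^[N * (q * p)] (z + ((N * (p * c') : ℕ) : ℤ) * L)
        = F^[N * (q * p)] z + ((N * (p * c') : ℕ) : ℤ) * L :=
      hF.iter_shift _ _ _
    rw [hshift] at hcoup
    have hc_le : c' ≤ q := hcp'
    have hcast : ((p * (q - c') : ℕ) : ℤ) = (p : ℤ) * q - p * c' := by
      push_cast [Nat.cast_sub hc_le]
      ring
    push_cast [hcast] at hcoup ⊢
    nlinarith [hcoup]
  -- combine: q * c + p * c' = p * q
  have hc_le : c ≤ p := hcp
  have hc_le' : c' ≤ q := hcp'
  have hA' : (q : ℤ) * p - q * c ≤ p * c' := by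
    have h' : ((q * (p - c) : ℕ) : ℤ) ≤ ((p * c' : ℕ) : ℤ) := by exact_mod_cast hA
    push_cast [Nat.cast_sub hc_le] at h'
    linarith
  have hB' : (q : ℤ) * c ≤ (p : ℤ) * q - p * c' := by
    have h' : ((q * c : ℕ) : ℤ) ≤ ((p * (q - c') : ℕ) : ℤ) := by exact_mod_cast hB
    push_cast [Nat.cast_sub hc_le'] at h'
    linarith
  have hsum' : (q : ℤ) * c + p * c' = p * q := by linarith
  have hpq : p ∣ q := by
    apply Nat.Coprime.dvd_of_dvd_mul_right (hcop₁.symm)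
    refine ⟨q - c', ?_⟩
    have : ((q * c : ℕ) : ℤ) = ((p * (q - c') : ℕ) : ℤ) := by
      push_cast [Nat.cast_sub hc_le']
      linarith
    exact_mod_cast this
  have hqp : q ∣ p := by
    apply Nat.Coprime.dvd_of_dvd_mul_right (hcop₂.symm)
    refine ⟨p - c, ?_⟩
    have : ((p * c' : ℕ) : ℤ) = ((q * (p - c) : ℕ) : ℤ) := by
      push_cast [Nat.cast_sub hc_le]
      linarith
    exact_mod_cast this
  exact Nat.dvd_antisymm hpq hqp


section Concrete

variable (u : List A) (hu : u ≠ []) (hA : ∀ a : A, a ∈ u)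

lemma omega_mod (i : ℕ) : omegaWord u hu i = u.get ⟨i % u.length, Nat.mod_lt i (List.length_pos_iff.mpr hu)⟩ := rfl

lemma omega_congr {i j : ℕ} (h : i % u.length = j % u.length) :
    omegaWord u hu i = omegaWord u hu j := by
  unfold omegaWord
  congr 1
  exact Fin.ext h

lemma omega_add_len (i : ℕ) : omegaWord u hu (i + u.length) = omegaWord u hu i :=
  omega_congr u hu (Nat.add_mod_right i u.length)

include hA in
lemma exists_letter_in_window (i : ℕ) (a : A) :
    ∃ m : ℕ, i ≤ m ∧ m < i + u.length ∧ omegaWord u hu m = a := by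
  have hL : 0 < u.length := List.length_pos_iff.mpr hu
  obtain ⟨⟨r, hr⟩, hget⟩ := List.mem_iff_get.mp (hA a)
  have hdm := Nat.div_add_mod i u.length
  have hml := Nat.mod_lt i hL
  rcases le_or_gt (i % u.length) r with hc | hc
  · refine ⟨u.length * (i / u.length) + r, by omega, by omega, ?_⟩
    rw [omega_mod, ← hget]
    congr 1
    apply Fin.ext
    show (u.length * (i / u.length) + r) % u.length = r
    rw [Nat.mul_add_mod]
    exact Nat.mod_eq_of_lt hr
  · refine ⟨u.length * (i / u.length) + (u.length + r), by omega, by omega, ?_⟩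
    rw [omega_mod, ← hget]
    congr 1
    apply Fin.ext
    show (u.length * (i / u.length) + (u.length + r)) % u.length = r
    rw [Nat.mul_add_mod, Nat.add_mod_left]
    exact Nat.mod_eq_of_lt hr

include hA in
lemma top_mem (i : ℕ) :
    (i + u.length) ∈ {j : ℕ | i < j ∧ ∀ a : A, ∃ m : ℕ, i ≤ m ∧ m < j ∧ omegaWord u hu m = a} := by
  have hL : 0 < u.length := List.length_pos_iff.mpr hu
  exact ⟨by omega, fun a => exists_letter_in_window u hu hA i a⟩

include hA in
lemma archJump_mem (i : ℕ) :
    i < archJump u hu i ∧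
      ∀ a : A, ∃ m : ℕ, i ≤ m ∧ m < archJump u hu i ∧ omegaWord u hu m = a :=
  Nat.sInf_mem ⟨i + u.length, top_mem u hu hA i⟩

include hA in
lemma archJump_gt (i : ℕ) : i < archJump u hu i := (archJump_mem u hu hA i).1

include hA in
lemma archJump_le (i : ℕ) : archJump u hu i ≤ i + u.length :=
  Nat.sInf_le (top_mem u hu hA i)

include hA in
lemma archJump_mono : Monotone (archJump u hu) := by
  intro i j hij
  apply Nat.sInf_le
  obtain ⟨h1, h2⟩ := archJump_mem u hu hA j
  refine ⟨by omega, fun a => ?_⟩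
  obtain ⟨m, hm1, hm2, hm3⟩ := h2 a
  exact ⟨m, by omega, hm2, hm3⟩

include hA in
lemma archJump_add_len (i : ℕ) :
    archJump u hu (i + u.length) = archJump u hu i + u.length := by
  set L := u.length with hL
  have hL0 : 0 < L := List.length_pos_iff.mpr hu
  have hle : archJump u hu (i + L) ≤ archJump u hu i + L := by
    apply Nat.sInf_le
    obtain ⟨h1, h2⟩ := archJump_mem u hu hA i
    refine ⟨by omega, fun a => ?_⟩
    obtain ⟨m, hm1, hm2, hm3⟩ := h2 a
    exact ⟨m + L, by omega, by omega, by rw [omega_add_len]; exact hm3⟩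
  have hge : archJump u hu i ≤ archJump u hu (i + L) - L := by
    apply Nat.sInf_le
    obtain ⟨h1, h2⟩ := archJump_mem u hu hA (i + L)
    refine ⟨by omega, fun a => ?_⟩
    obtain ⟨m, hm1, hm2, hm3⟩ := h2 a
    refine ⟨m - L, by omega, by omega, ?_⟩
    rw [← hm3]
    apply omega_congr
    conv_rhs => rw [show m = (m - L) + L by omega]
    rw [hL, Nat.add_mod_right]
  have := archJump_gt u hu hA (i + L)
  omega

include hA in
lemma archJump_add_mul (k : ℕ) (i : ℕ) :
    archJump u hu (i + k * u.length) = archJump u hu i + k * u.length := by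
  induction k with
  | zero => simp
  | succ k ih =>
      have h1 : i + (k + 1) * u.length = (i + k * u.length) + u.length := by ring
      rw [h1, archJump_add_len u hu hA, ih]
      ring

section Zext

noncomputable def Fz (u : List A) (hu : u ≠ []) : ℤ → ℤ :=
  fun x => (archJump u hu ((x % (u.length : ℤ)).toNat) : ℤ)
    + (x / (u.length : ℤ)) * (u.length : ℤ)

lemma Fz_natCast (u : List A) (hu : u ≠ []) (hA : ∀ a : A, a ∈ u) (n : ℕ) : Fz u hu (n : ℤ) = (archJump u hu n : ℤ) := by
  have hL : 0 < u.length := List.length_pos_iff.mpr hu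
  unfold Fz
  have h1 : ((n : ℤ) % (u.length : ℤ)).toNat = n % u.length := by
    have : ((n : ℤ) % (u.length : ℤ)) = ((n % u.length : ℕ) : ℤ) := by push_cast; ring
    rw [this, Int.toNat_natCast]
  have h2 : (n : ℤ) / (u.length : ℤ) = ((n / u.length : ℕ) : ℤ) := by
    rw [Int.natCast_ediv]
  rw [h1, h2]
  have h3 := archJump_add_mul u hu hA (n / u.length) (n % u.length)
  rw [Nat.mod_add_div' n u.length] at h3
  rw [h3]
  push_cast
  ring

lemma Fz_shift (u : List A) (hu : u ≠ []) (hA : ∀ a : A, a ∈ u) (x : ℤ) : Fz u hu (x + u.length) = Fz u hu x + u.length := by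
  have hL : 0 < u.length := List.length_pos_iff.mpr hu
  have hL' : (0 : ℤ) < (u.length : ℤ) := by exact_mod_cast hL
  unfold Fz
  have h1 : (x + (u.length : ℤ)) % (u.length : ℤ) = x % (u.length : ℤ) := by
    rw [show x + (u.length : ℤ) = x + (u.length : ℤ) * 1 by ring,
      Int.add_mul_emod_self_left]
  have h2 : (x + (u.length : ℤ)) / (u.length : ℤ) = x / (u.length : ℤ) + 1 := by
    rw [show x + (u.length : ℤ) = x + 1 * (u.length : ℤ) by ring,
      Int.add_mul_ediv_right _ _ hL'.ne']
  rw [h1, h2]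
  ring

lemma Fz_shift_nat (u : List A) (hu : u ≠ []) (hA : ∀ a : A, a ∈ u) (k : ℕ) (x : ℤ) :
    Fz u hu (x + (k : ℤ) * u.length) = Fz u hu x + (k : ℤ) * u.length := by
  induction k with
  | zero => simp only [Nat.cast_zero, zero_mul, add_zero]
  | succ k ih =>
      have : x + ((k : ℤ) + 1) * u.length = (x + (k : ℤ) * u.length) + u.length := by ring
      push_cast
      rw [this, Fz_shift u hu hA, ih]
      ring

lemma Fz_mono (u : List A) (hu : u ≠ []) (hA : ∀ a : A, a ∈ u) : Monotone (Fz u hu) := by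
  have hL : 0 < u.length := List.length_pos_iff.mpr hu
  have hL' : (0 : ℤ) < (u.length : ℤ) := by exact_mod_cast hL
  intro x y hxy
  set k := x.natAbs with hk
  have hx0 : 0 ≤ x + (k : ℤ) * u.length := by
    have h1 : -(k : ℤ) ≤ x := by omega
    nlinarith [show (1:ℤ) ≤ (u.length : ℤ) by omega, show (0:ℤ) ≤ (k:ℤ) by positivity]
  have hy0 : 0 ≤ y + (k : ℤ) * u.length := by omega
  set m := (x + (k : ℤ) * u.length).toNat with hm
  set n := (y + (k : ℤ) * u.length).toNat with hn
  have hmx : (m : ℤ) = x + (k : ℤ) * u.length := Int.toNat_of_nonneg hx0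
  have hny : (n : ℤ) = y + (k : ℤ) * u.length := Int.toNat_of_nonneg hy0
  have hmn : m ≤ n := by omega
  have h1 : Fz u hu x + (k : ℤ) * u.length = (archJump u hu m : ℤ) := by
    rw [← Fz_shift_nat u hu hA, ← hmx, Fz_natCast u hu hA]
  have h2 : Fz u hu y + (k : ℤ) * u.length = (archJump u hu n : ℤ) := by
    rw [← Fz_shift_nat u hu hA, ← hny, Fz_natCast u hu hA]
  have h3 : archJump u hu m ≤ archJump u hu n := archJump_mono u hu hA hmn
  omega

lemma Fz_adm (u : List A) (hu : u ≠ []) (hA : ∀ a : A, a ∈ u) : Adm u.length (Fz u hu) := by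
  have hL : 0 < u.length := List.length_pos_iff.mpr hu
  have hL' : (0 : ℤ) < (u.length : ℤ) := by exact_mod_cast hL
  refine ⟨Fz_mono u hu hA, ?_, ?_, Fz_shift u hu hA⟩
  · intro x
    have h0 : 0 ≤ x % (u.length : ℤ) := Int.emod_nonneg x hL'.ne'
    have h3 := Int.emod_add_mul_ediv x (u.length : ℤ)
    have h4 := archJump_gt u hu hA ((x % (u.length : ℤ)).toNat)
    have h5 : ((x % (u.length : ℤ)).toNat : ℤ) = x % (u.length : ℤ) := Int.toNat_of_nonneg h0
    show x ≤ (archJump u hu ((x % (u.length : ℤ)).toNat) : ℤ) + (x / (u.length : ℤ)) * (u.length : ℤ)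
    have h3b : x / (u.length : ℤ) * (u.length : ℤ) = (u.length : ℤ) * (x / (u.length : ℤ)) :=
      mul_comm _ _
    omega
  · intro x
    have h0 : 0 ≤ x % (u.length : ℤ) := Int.emod_nonneg x hL'.ne'
    have h3 := Int.emod_add_mul_ediv x (u.length : ℤ)
    have h4 := archJump_le u hu hA ((x % (u.length : ℤ)).toNat)
    have h5 : ((x % (u.length : ℤ)).toNat : ℤ) = x % (u.length : ℤ) := Int.toNat_of_nonneg h0
    show (archJump u hu ((x % (u.length : ℤ)).toNat) : ℤ) + (x / (u.length : ℤ)) * (u.length : ℤ) ≤ x + u.length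
    have h6 : (archJump u hu ((x % (u.length : ℤ)).toNat) : ℤ)
        ≤ ((x % (u.length : ℤ)).toNat : ℤ) + u.length := by exact_mod_cast h4
    have h3b : x / (u.length : ℤ) * (u.length : ℤ) = (u.length : ℤ) * (x / (u.length : ℤ)) :=
      mul_comm _ _
    omega

lemma Fz_iter_natCast (u : List A) (hu : u ≠ []) (hA : ∀ a : A, a ∈ u) (k : ℕ) (n : ℕ) :
    (Fz u hu)^[k] (n : ℤ) = ((archJump u hu)^[k] n : ℤ) := by
  induction k with
  | zero => simp
  | succ k ih =>
      rw [Function.iterate_succ_apply', Function.iterate_succ_apply', ih,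
        Fz_natCast u hu hA]

lemma perSet_iff (u : List A) (hu : u ≠ []) (hA : ∀ a : A, a ∈ u) (n : ℕ) (p : ℕ) :
    p ∈ PerSet u.length (Fz u hu) (n : ℤ) ↔
      (0 < p ∧ ∃ k, (archJump u hu)^[k + p] n ≡ (archJump u hu)^[k] n [MOD u.length]) := by
  unfold PerSet
  simp only [Set.mem_setOf_eq]
  constructor
  · rintro ⟨hp, k, hdvd⟩
    refine ⟨hp, k, ?_⟩
    rw [Fz_iter_natCast u hu hA, Fz_iter_natCast u hu hA] at hdvd
    rw [Nat.modEq_iff_dvd]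
    have h2 := dvd_neg.mpr hdvd
    rw [neg_sub] at h2
    exact h2
  · rintro ⟨hp, k, hmod⟩
    refine ⟨hp, k, ?_⟩
    rw [Fz_iter_natCast u hu hA, Fz_iter_natCast u hu hA]
    have := (Nat.modEq_iff_dvd.mp hmod)
    have h2 := dvd_neg.mpr this
    rw [neg_sub] at h2
    exact h2

lemma archPeriod_eq_minPer (u : List A) (hu : u ≠ []) (hA : ∀ a : A, a ∈ u) : archPeriod u hu = minPer u.length (Fz u hu) 0 := by
  unfold archPeriod minPer
  congr 1
  ext p
  have := perSet_iff u hu hA 0 p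
  rw [Nat.cast_zero] at this
  rw [this]
  rfl

end Zext

section Conj

variable (u₁ u₂ : List A)

lemma conj_length : (u₂ ++ u₁).length = (u₁ ++ u₂).length := by
  simp [List.length_append]; omega

lemma conj_mem (hA : ∀ a : A, a ∈ u₁ ++ u₂) : ∀ a : A, a ∈ u₂ ++ u₁ := by
  intro a
  have := hA a
  simp only [List.mem_append] at *
  tauto

lemma omega_conj (hu : u₁ ++ u₂ ≠ []) (hv : u₂ ++ u₁ ≠ []) (j : ℕ) :
    omegaWord (u₂ ++ u₁) hv j = omegaWord (u₁ ++ u₂) hu (j + u₁.length) := by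
  set d := u₁.length with hd
  set L := (u₁ ++ u₂).length with hL
  have hL2 : (u₂ ++ u₁).length = L := conj_length u₁ u₂
  have hLval : L = u₁.length + u₂.length := by simp [hL, List.length_append]
  have hL0 : 0 < L := List.length_pos_iff.mpr hu
  unfold omegaWord
  rw [List.get_eq_getElem, List.get_eq_getElem]
  set m := j % (u₂ ++ u₁).length with hm
  have hmlt : m < L := by rw [hm, hL2]; exact Nat.mod_lt _ (by omega)
  have hmod : (j + d) % L = (m + d) % L := by
    rw [hm, hL2]
    conv_lhs => rw [← Nat.mod_add_mod]
  rcases lt_or_ge m u₂.length with hc | hc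
  · have h1 : (u₂ ++ u₁)[m]'(by simpa [hL2] using hmlt) = u₂[m]'hc :=
      List.getElem_append_left _
    have h2 : (m + d) % L = d + m := by
      rw [Nat.mod_eq_of_lt (by omega)]; omega
    have h3 : (j + d) % (u₁ ++ u₂).length = d + m := by rw [← hL, hmod, h2]
    have h4 : (u₁ ++ u₂)[(j + d) % (u₁ ++ u₂).length]'(Nat.mod_lt _ (by omega))
        = (u₁ ++ u₂)[d + m]'(by omega) := by
      congr 1
    rw [h1, h4]
    have h5 : (u₁ ++ u₂)[d + m]'(by omega) = u₂[d + m - u₁.length]'(by omega) :=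
      List.getElem_append_right (by omega)
    rw [h5]
    congr 1
    omega
  · have h1 : (u₂ ++ u₁)[m]'(by simpa [hL2] using hmlt)
        = u₁[m - u₂.length]'(by omega) := List.getElem_append_right hc
    have h2 : (m + d) % L = m - u₂.length := by
      rw [Nat.mod_eq_sub_mod (by omega), Nat.mod_eq_of_lt (by omega)]
      omega
    have h3 : (j + d) % (u₁ ++ u₂).length = m - u₂.length := by rw [← hL, hmod, h2]
    have h4 : (u₁ ++ u₂)[(j + d) % (u₁ ++ u₂).length]'(Nat.mod_lt _ (by omega))
        = (u₁ ++ u₂)[m - u₂.length]'(by omega) := by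
      congr 1
    rw [h1, h4]
    exact (List.getElem_append_left _).symm

lemma archJump_conj (hu : u₁ ++ u₂ ≠ []) (hv : u₂ ++ u₁ ≠ [])
    (hA : ∀ a : A, a ∈ u₁ ++ u₂) (i : ℕ) :
    archJump (u₂ ++ u₁) hv i + u₁.length = archJump (u₁ ++ u₂) hu (i + u₁.length) := by
  set d := u₁.length with hd
  have hAv := conj_mem u₁ u₂ hA
  have hle : archJump (u₁ ++ u₂) hu (i + d) ≤ archJump (u₂ ++ u₁) hv i + d := by
    apply Nat.sInf_le
    obtain ⟨h1, h2⟩ := archJump_mem (u₂ ++ u₁) hv hAv i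
    refine ⟨by omega, fun a => ?_⟩
    obtain ⟨m, hm1, hm2, hm3⟩ := h2 a
    exact ⟨m + d, by omega, by omega, by rw [← omega_conj u₁ u₂ hu hv]; exact hm3⟩
  have hge : archJump (u₂ ++ u₁) hv i ≤ archJump (u₁ ++ u₂) hu (i + d) - d := by
    apply Nat.sInf_le
    obtain ⟨h1, h2⟩ := archJump_mem (u₁ ++ u₂) hu hA (i + d)
    refine ⟨by omega, fun a => ?_⟩
    obtain ⟨m, hm1, hm2, hm3⟩ := h2 a
    refine ⟨m - d, by omega, by omega, ?_⟩
    rw [omega_conj u₁ u₂ hu hv, show m - d + d = m by omega]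
    exact hm3
  have := archJump_gt (u₁ ++ u₂) hu hA (i + d)
  omega

lemma archJump_conj_iter (hu : u₁ ++ u₂ ≠ []) (hv : u₂ ++ u₁ ≠ [])
    (hA : ∀ a : A, a ∈ u₁ ++ u₂) (k : ℕ) (i : ℕ) :
    (archJump (u₂ ++ u₁) hv)^[k] i + u₁.length
      = (archJump (u₁ ++ u₂) hu)^[k] (i + u₁.length) := by
  induction k with
  | zero => simp
  | succ k ih =>
      rw [Function.iterate_succ_apply', Function.iterate_succ_apply',
        archJump_conj u₁ u₂ hu hv hA, ih]

lemma conj_archPeriod (hu : u₁ ++ u₂ ≠ []) (hv : u₂ ++ u₁ ≠ [])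
    (hA : ∀ a : A, a ∈ u₁ ++ u₂) :
    archPeriod (u₂ ++ u₁) hv = archPeriod (u₁ ++ u₂) hu := by
  set d := u₁.length with hd
  set L := (u₁ ++ u₂).length with hL
  have hL0 : 0 < L := List.length_pos_iff.mpr hu
  have hL2 : (u₂ ++ u₁).length = L := conj_length u₁ u₂
  have hadm := Fz_adm (u₁ ++ u₂) hu hA
  have hstep1 : archPeriod (u₂ ++ u₁) hv = minPer L (Fz (u₁ ++ u₂) hu) (d : ℤ) := by
    unfold archPeriod minPer
    congr 1
    ext p
    rw [Set.mem_setOf_eq]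
    unfold IsArchPeriodAt
    rw [perSet_iff (u₁ ++ u₂) hu hA d p]
    constructor
    · rintro ⟨hp, k, hmod⟩
      refine ⟨hp, k, ?_⟩
      have e1 := archJump_conj_iter u₁ u₂ hu hv hA (k + p) 0
      have e2 := archJump_conj_iter u₁ u₂ hu hv hA k 0
      rw [Nat.zero_add] at e1 e2
      rw [← e1, ← e2]
      rw [hL2] at hmod
      exact Nat.ModEq.add_right d hmod
    · rintro ⟨hp, k, hmod⟩
      refine ⟨hp, k, ?_⟩
      have e1 := archJump_conj_iter u₁ u₂ hu hv hA (k + p) 0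
      have e2 := archJump_conj_iter u₁ u₂ hu hv hA k 0
      rw [Nat.zero_add] at e1 e2
      rw [← e1, ← e2] at hmod
      rw [hL2]
      exact Nat.ModEq.add_right_cancel' d hmod
  rw [hstep1, minPer_indep hadm hL0 (d : ℤ) 0, ← archPeriod_eq_minPer (u₁ ++ u₂) hu hA]

end Conj

section Rev

lemma rev_corr (u : List A) (hu : u ≠ []) (hv : u.reverse ≠ []) (m k : ℕ)
    (hmk : m < k * u.length) :
    omegaWord u.reverse hv (k * u.length - 1 - m) = omegaWord u hu m := by
  set L := u.length with hL
  have hL0 : 0 < L := List.length_pos_iff.mpr hu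
  have hdm := Nat.div_add_mod m L
  have hml : m % L < L := Nat.mod_lt _ hL0
  have hqk : m / L < k := by
    rcases Nat.lt_or_ge (m / L) k with h | h
    · exact h
    · exfalso
      have : k * L ≤ (m / L) * L := Nat.mul_le_mul_right _ h
      have hb : L * (m / L) = (m / L) * L := mul_comm _ _
      omega
  have he : k - m / L - 1 + 1 + m / L = k := by omega
  have hdist : L * (k - m / L - 1) + L + L * (m / L) = k * L := by
    calc L * (k - m / L - 1) + L + L * (m / L)
        = (k - m / L - 1 + 1 + m / L) * L := by ring
    _ = k * L := by rw [he]
  have key : k * L - 1 - m = L * (k - m / L - 1) + (L - 1 - m % L) := by omega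
  unfold omegaWord
  rw [List.get_eq_getElem, List.get_eq_getElem]
  have hrevlen : u.reverse.length = L := by rw [List.length_reverse]
  have hidx : (k * L - 1 - m) % u.reverse.length = L - 1 - m % L := by
    rw [hrevlen, key, Nat.mul_add_mod]
    exact Nat.mod_eq_of_lt (by omega)
  have hidx2 : (k * L - 1 - m) % u.reverse.length < u.reverse.length := by
    rw [hrevlen]; exact Nat.mod_lt _ hL0
  have h1 : u.reverse[(k * L - 1 - m) % u.reverse.length]'hidx2
      = u.reverse[L - 1 - m % L]'(by omega) := by
    congr 1
  rw [h1, List.getElem_reverse]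
  congr 1
  show u.length - 1 - (L - 1 - m % L) = m % u.length
  rw [← hL]
  omega

/-- If windows transfer contravariantly from `u` to `v`, then arch jumps couple. -/
lemma coupling_aux (u v : List A) (hu : u ≠ []) (hv : v ≠ [])
    (hA : ∀ a : A, a ∈ u)
    (hcorr : ∀ m k : ℕ, m < k * u.length →
      omegaWord v hv (k * u.length - 1 - m) = omegaWord u hu m)
    (i N : ℕ) (hiN : archJump u hu i ≤ N * u.length) :
    archJump v hv (N * u.length - archJump u hu i) ≤ N * u.length - i := by
  set L := u.length with hL
  obtain ⟨hgt, hmem⟩ := archJump_mem u hu hA i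
  apply Nat.sInf_le
  refine ⟨by omega, fun a => ?_⟩
  obtain ⟨m, hm1, hm2, hm3⟩ := hmem a
  refine ⟨N * L - 1 - m, by omega, by omega, ?_⟩
  rw [hcorr m N (by omega)]
  exact hm3

lemma rev_mem (u : List A) (hA : ∀ a : A, a ∈ u) : ∀ a : A, a ∈ u.reverse := by
  intro a; rw [List.mem_reverse]; exact hA a

lemma rev_corr' (u : List A) (hu : u ≠ []) (hv : u.reverse ≠ []) (m k : ℕ)
    (hmk : m < k * u.reverse.length) :
    omegaWord u hu (k * u.reverse.length - 1 - m) = omegaWord u.reverse hv m := by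
  have hrevlen : u.reverse.length = u.length := List.length_reverse
  rw [hrevlen] at hmk ⊢
  have := rev_corr u hu hv (k * u.length - 1 - m) k (by omega)
  rw [show k * u.length - 1 - (k * u.length - 1 - m) = m by omega] at this
  exact this.symm

noncomputable def Gz (u : List A) (hv : u.reverse ≠ []) : ℤ → ℤ :=
  fun x => (u.length : ℤ) - Fz u.reverse hv (-x)

lemma Gz_adm (u : List A) (hu : u ≠ []) (hv : u.reverse ≠ [])
    (hA : ∀ a : A, a ∈ u) : Adm u.length (Gz u hv) := by
  have hAv := rev_mem u hA
  have hFv := Fz_adm u.reverse hv hAv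
  have hrevlen : u.reverse.length = u.length := List.length_reverse
  rw [hrevlen] at hFv
  constructor
  · intro x y hxy
    have : Fz u.reverse hv (-y) ≤ Fz u.reverse hv (-x) := hFv.mono (by omega)
    unfold Gz
    omega
  · intro x
    have := hFv.le (-x)
    unfold Gz
    omega
  · intro x
    have := hFv.ge (-x)
    unfold Gz
    omega
  · intro x
    have h1 : Fz u.reverse hv (-x - u.length + u.length)
        = Fz u.reverse hv (-x - u.length) + u.length := hFv.shift _
    unfold Gz
    rw [show -(x + (u.length : ℤ)) = -x - u.length by ring]
    rw [show -x - (u.length : ℤ) + u.length = -x by ring] at h1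
    omega

lemma Gz_iter (u : List A) (hu : u ≠ []) (hv : u.reverse ≠ [])
    (hA : ∀ a : A, a ∈ u) (k : ℕ) (x : ℤ) :
    (Gz u hv)^[k] x = (k : ℤ) * u.length - (Fz u.reverse hv)^[k] (-x) := by
  have hAv := rev_mem u hA
  have hFv := Fz_adm u.reverse hv hAv
  induction k generalizing x with
  | zero => simp
  | succ k ih =>
      rw [Function.iterate_succ_apply, ih]
      have h2 : -(Gz u hv x) = Fz u.reverse hv (-x) + (-1 : ℤ) * u.reverse.length := by
        unfold Gz
        rw [List.length_reverse]
        ring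
      rw [h2, hFv.iter_shift k (-1 : ℤ) _, ← Function.iterate_succ_apply]
      rw [List.length_reverse]
      push_cast
      ring

lemma coupling_ext1 {L : ℕ} {F G : ℤ → ℤ} (hF : Adm L F) (hG : Adm L G) (hL : 0 < L)
    (h : ∀ n : ℕ, (n : ℤ) + L ≤ G (F (n : ℤ))) : ∀ x : ℤ, x + L ≤ G (F x) := by
  intro x
  set k := x.natAbs with hk
  have hk0 : (0 : ℤ) ≤ (k : ℤ) := by positivity
  have hkx : -(k : ℤ) ≤ x := by omega
  have hx0 : 0 ≤ x + (k : ℤ) * L := by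
    nlinarith [show (1 : ℤ) ≤ (L : ℤ) by exact_mod_cast hL]
  set n := (x + (k : ℤ) * L).toNat with hn
  have hnx : (n : ℤ) = x + (k : ℤ) * L := Int.toNat_of_nonneg hx0
  have hh := h n
  rw [hnx, hF.shift_int (k : ℤ) x, hG.shift_int (k : ℤ) (F x)] at hh
  linarith

lemma coupling_ext2 {L : ℕ} {F G : ℤ → ℤ} (hF : Adm L F) (hG : Adm L G) (hL : 0 < L)
    (h : ∀ n : ℕ, F (G (n : ℤ)) ≤ (n : ℤ) + L) : ∀ x : ℤ, F (G x) ≤ x + L := by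
  intro x
  set k := x.natAbs with hk
  have hk0 : (0 : ℤ) ≤ (k : ℤ) := by positivity
  have hkx : -(k : ℤ) ≤ x := by omega
  have hx0 : 0 ≤ x + (k : ℤ) * L := by
    nlinarith [show (1 : ℤ) ≤ (L : ℤ) by exact_mod_cast hL]
  set n := (x + (k : ℤ) * L).toNat with hn
  have hnx : (n : ℤ) = x + (k : ℤ) * L := Int.toNat_of_nonneg hx0
  have hh := h n
  rw [hnx, hG.shift_int (k : ℤ) x, hF.shift_int (k : ℤ) (G x)] at hh
  linarith

lemma Gz_coupling1 (u : List A) (hu : u ≠ []) (hv : u.reverse ≠ [])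
    (hA : ∀ a : A, a ∈ u) (x : ℤ) : x + u.length ≤ Gz u hv (Fz u hu x) := by
  have hL0 : 0 < u.length := List.length_pos_iff.mpr hu
  have hAv := rev_mem u hA
  have hFv : Adm u.reverse.length (Fz u.reverse hv) := Fz_adm u.reverse hv hAv
  refine coupling_ext1 (Fz_adm u hu hA) (Gz_adm u hu hv hA) hL0 (fun n => ?_) x
  set L := u.length with hL
  set N := n + 1 with hN
  have hmul : n * 1 ≤ n * L := Nat.mul_le_mul_left n hL0
  have hNL : N * L = n * L + L := by ring
  have hαle : archJump u hu n ≤ N * L := by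
    have := archJump_le u hu hA n
    omega
  have hαgt : n < archJump u hu n := archJump_gt u hu hA n
  rw [Fz_natCast u hu hA n]
  have hcast : -(archJump u hu n : ℤ)
      = ((N * L - archJump u hu n : ℕ) : ℤ) + (-(N : ℤ)) * u.reverse.length := by
    rw [List.length_reverse, ← hL]
    push_cast [Nat.cast_sub hαle]
    ring
  have hFveq : Fz u.reverse hv (-(archJump u hu n : ℤ))
      = (archJump u.reverse hv (N * L - archJump u hu n) : ℤ) - (N : ℤ) * L := by
    rw [hcast, hFv.shift_int, Fz_natCast u.reverse hv hAv]
    rw [List.length_reverse, ← hL]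
    ring
  have hgz : Gz u hv (archJump u hu n : ℤ)
      = (L : ℤ) - Fz u.reverse hv (-(archJump u hu n : ℤ)) := rfl
  rw [hgz, hFveq]
  have hcpl := coupling_aux u u.reverse hu hv hA
    (fun m k hm => rev_corr u hu hv m k hm) n N hαle
  rw [← hL] at hcpl
  have hc2 : ((archJump u.reverse hv (N * L - archJump u hu n)) : ℤ)
      ≤ (N : ℤ) * L - n := by
    have hnN : n ≤ N * L := by omega
    have h6 := (Nat.cast_le (α := ℤ)).mpr hcpl
    push_cast [Nat.cast_sub hnN] at h6
    have hNeq : (N : ℤ) * L = ((n : ℤ) + 1) * L := by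
      rw [show (N : ℤ) = (n : ℤ) + 1 by rw [hN]; push_cast; ring]
    linarith
  linarith

lemma Gz_coupling2 (u : List A) (hu : u ≠ []) (hv : u.reverse ≠ [])
    (hA : ∀ a : A, a ∈ u) (x : ℤ) : Fz u hu (Gz u hv x) ≤ x + u.length := by
  have hL0 : 0 < u.length := List.length_pos_iff.mpr hu
  have hAv := rev_mem u hA
  have hFv : Adm u.reverse.length (Fz u.reverse hv) := Fz_adm u.reverse hv hAv
  have hrlen : u.reverse.length = u.length := List.length_reverse
  refine coupling_ext2 (Fz_adm u hu hA) (Gz_adm u hu hv hA) hL0 (fun n => ?_) x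
  set L := u.length with hL
  set N := n + 1 with hN
  have hmul : n * 1 ≤ n * L := Nat.mul_le_mul_left n hL0
  have hNL : N * L = n * L + L := by ring
  have hnN : n ≤ N * L := by omega
  set mv := N * L - n with hmv
  -- Fz v (-n) = α_v(mv) - N*L
  have hcast : -(n : ℤ) = ((mv : ℕ) : ℤ) + (-(N : ℤ)) * u.reverse.length := by
    rw [hrlen, hmv]
    push_cast [Nat.cast_sub hnN]
    ring
  have hFveq : Fz u.reverse hv (-(n : ℤ))
      = (archJump u.reverse hv mv : ℤ) - (N : ℤ) * L := by
    rw [hcast, hFv.shift_int, Fz_natCast u.reverse hv hAv]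
    rw [hrlen]
    ring
  have hαv_le : archJump u.reverse hv mv ≤ (N + 1) * L := by
    have h1 := archJump_le u.reverse hv hAv mv
    rw [hrlen] at h1
    have : (N + 1) * L = N * L + L := by ring
    omega
  have hgz : Gz u hv (n : ℤ) = (L : ℤ) - Fz u.reverse hv (-(n : ℤ)) := rfl
  have hgzn : Gz u hv (n : ℤ) = (((N + 1) * L - archJump u.reverse hv mv : ℕ) : ℤ) := by
    rw [hgz, hFveq]
    push_cast [Nat.cast_sub hαv_le]
    ring
  rw [hgzn, Fz_natCast u hu hA]
  -- coupling the other way: use coupling_aux with (v, u)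
  have hαv_le' : archJump u.reverse hv mv ≤ (N + 1) * u.reverse.length := by
    rw [hrlen]; exact hαv_le
  have hcpl := coupling_aux u.reverse u hv hu hAv
    (fun m k hm => rev_corr' u hu hv m k hm) mv (N + 1) hαv_le'
  rw [hrlen] at hcpl
  -- hcpl : archJump u hu ((N+1)*L - α_v mv) ≤ (N+1)*L - mv
  have hend : (N + 1) * L - mv = n + L := by
    have : (N + 1) * L = N * L + L := by ring
    omega
  rw [hend] at hcpl
  have := (Nat.cast_le (α := ℤ)).mpr hcpl
  push_cast at this ⊢
  linarith

lemma perSet_Gz (u : List A) (hu : u ≠ []) (hv : u.reverse ≠ [])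
    (hA : ∀ a : A, a ∈ u) (p : ℕ) :
    p ∈ PerSet u.length (Gz u hv) 0 ↔
      p ∈ PerSet u.reverse.length (Fz u.reverse hv) 0 := by
  have hrlen : u.reverse.length = u.length := List.length_reverse
  unfold PerSet
  simp only [Set.mem_setOf_eq, hrlen]
  have hiter : ∀ k : ℕ, (Gz u hv)^[k] 0 = (k : ℤ) * u.length - (Fz u.reverse hv)^[k] 0 := by
    intro k
    have := Gz_iter u hu hv hA k 0
    rw [neg_zero] at this
    exact this
  constructor
  · rintro ⟨hp, k, hdvd⟩
    refine ⟨hp, k, ?_⟩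
    rw [hiter, hiter] at hdvd
    have he : ((k + p : ℕ) : ℤ) * u.length - (Fz u.reverse hv)^[k + p] 0
        - ((k : ℕ) * u.length - (Fz u.reverse hv)^[k] 0)
        = (p : ℤ) * u.length - ((Fz u.reverse hv)^[k + p] 0 - (Fz u.reverse hv)^[k] 0) := by
      push_cast
      ring
    rw [he] at hdvd
    have hpl : (u.length : ℤ) ∣ (p : ℤ) * u.length := ⟨p, mul_comm _ _⟩
    have := (dvd_sub_right hpl).mp hdvd
    exact this
  · rintro ⟨hp, k, hdvd⟩
    refine ⟨hp, k, ?_⟩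
    rw [hiter, hiter]
    have he : ((k + p : ℕ) : ℤ) * u.length - (Fz u.reverse hv)^[k + p] 0
        - ((k : ℕ) * u.length - (Fz u.reverse hv)^[k] 0)
        = (p : ℤ) * u.length - ((Fz u.reverse hv)^[k + p] 0 - (Fz u.reverse hv)^[k] 0) := by
      push_cast
      ring
    rw [he]
    have hpl : (u.length : ℤ) ∣ (p : ℤ) * u.length := ⟨p, mul_comm _ _⟩
    exact (dvd_sub_right hpl).mpr hdvd

lemma rev_archPeriod (u : List A) (hu : u ≠ []) (hv : u.reverse ≠ [])
    (hA : ∀ a : A, a ∈ u) :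
    archPeriod u.reverse hv = archPeriod u hu := by
  have hL0 : 0 < u.length := List.length_pos_iff.mpr hu
  have hAv := rev_mem u hA
  have h1 : archPeriod u.reverse hv = minPer u.reverse.length (Fz u.reverse hv) 0 :=
    archPeriod_eq_minPer u.reverse hv hAv
  have h2 : minPer u.reverse.length (Fz u.reverse hv) 0 = minPer u.length (Gz u hv) 0 := by
    unfold minPer
    congr 1
    ext p
    exact (perSet_Gz u hu hv hA p).symm
  have h3 : minPer u.length (Fz u hu) 0 = minPer u.length (Gz u hv) 0 :=
    minPer_adjoint (Fz_adm u hu hA) (Gz_adm u hu hv hA) hL0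
      (Gz_coupling1 u hu hv hA) (Gz_coupling2 u hu hv hA) 0 0
  rw [h1, h2, ← h3, ← archPeriod_eq_minPer u hu hA]

end Rev

end Concrete

end Stmt17

/-- conjugates and the reversal of `u` have the same arch-period as `u`. -/
theorem stmt17 {A : Type*} [Fintype A] (u : List A) (hu : u ≠ [])
    (hA : ∀ a : A, a ∈ u) :
    (∀ u₁ u₂ : List A, u = u₁ ++ u₂ → ∀ hv : u₂ ++ u₁ ≠ [],
        archPeriod (u₂ ++ u₁) hv = archPeriod u hu) ∧
    (∀ hr : u.reverse ≠ [], archPeriod u.reverse hr = archPeriod u hu) := by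
  constructor
  · intro u₁ u₂ heq hv
    subst heq
    exact Stmt17.conj_archPeriod u₁ u₂ hu hv hA
  · intro hr
    exact Stmt17.rev_archPeriod u hu hr hA
end

section
/- Let u be a nonempty word of length L over a finite alphabet A with alph(u) = A, with arch-period p_u, transient T_u and span Δ_u. Then T_u + Δ_u ≤ (|A| + 1)·L. -/
variable {A : Type*}

lemma omega_eq_get (u : List A) (hu : u ≠ []) (i : ℕ) (p : ℕ) (hp : p < u.length)
    (h : i % u.length = p) : omegaWord u hu i = u.get ⟨p, hp⟩ := by
  simp only [omegaWord]; congr 1; exact Fin.ext h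

lemma exists_occ (u : List A) (hu : u ≠ []) (hA : ∀ a : A, a ∈ u) (a : A) (i : ℕ) :
    ∃ m, i ≤ m ∧ m < i + u.length ∧ omegaWord u hu m = a := by
  obtain ⟨p, hp, hpa⟩ := List.getElem_of_mem (hA a)
  have hLpos : 0 < u.length := List.length_pos_iff.mpr hu
  have hi := Nat.div_add_mod i u.length
  have hr := Nat.mod_lt i hLpos
  obtain ⟨Q, hQ⟩ : ∃ Q, u.length * (i / u.length) = Q := ⟨_, rfl⟩
  have hQ2 : u.length * (i / u.length + 1) = Q + u.length := by rw [Nat.mul_add, hQ]; ring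
  refine ⟨if i % u.length ≤ p then u.length * (i / u.length) + p
          else u.length * (i / u.length + 1) + p, by split <;> omega,
          by split <;> omega, ?_⟩
  have hmod : (if i % u.length ≤ p then u.length * (i / u.length) + p
      else u.length * (i / u.length + 1) + p) % u.length = p := by
    split <;> simp [Nat.mul_add_mod, Nat.mod_eq_of_lt hp]
  rw [omega_eq_get u hu _ p hp hmod]
  simpa using hpa

lemma archJump_mem (u : List A) (hu : u ≠ []) (hA : ∀ a : A, a ∈ u) (i : ℕ) :
    i < archJump u hu i ∧
      ∀ a : A, ∃ m : ℕ, i ≤ m ∧ m < archJump u hu i ∧ omegaWord u hu m = a := by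
  have hLpos : 0 < u.length := List.length_pos_iff.mpr hu
  have hne : (i + u.length) ∈ {j : ℕ | i < j ∧ ∀ a : A, ∃ m : ℕ, i ≤ m ∧ m < j ∧
      omegaWord u hu m = a} := ⟨by omega, fun a => exists_occ u hu hA a i⟩
  exact Nat.sInf_mem ⟨_, hne⟩

lemma archJump_le (u : List A) (hu : u ≠ []) (hA : ∀ a : A, a ∈ u) (i : ℕ) :
    archJump u hu i ≤ i + u.length := by
  have hLpos : 0 < u.length := List.length_pos_iff.mpr hu
  exact Nat.sInf_le ⟨by omega, fun a => exists_occ u hu hA a i⟩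

lemma archJump_min (u : List A) (hu : u ≠ []) (i j : ℕ) (h1 : i < j)
    (h2 : ∀ a : A, ∃ m : ℕ, i ≤ m ∧ m < j ∧ omegaWord u hu m = a) :
    archJump u hu i ≤ j := Nat.sInf_le ⟨h1, h2⟩

lemma archJump_shift (u : List A) (hu : u ≠ []) (hA : ∀ a : A, a ∈ u) (i : ℕ) :
    archJump u hu (i + u.length) = archJump u hu i + u.length := by
  obtain ⟨h1, h2⟩ := archJump_mem u hu hA i
  obtain ⟨h1', h2'⟩ := archJump_mem u hu hA (i + u.length)
  apply le_antisymm
  · refine archJump_min u hu _ _ (by omega) (fun a => ?_)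
    obtain ⟨m, hm1, hm2, hm3⟩ := h2 a
    exact ⟨m + u.length, by omega, by omega, by
      rw [show m + u.length = m + u.length from rfl]
      simp [omegaWord, Nat.add_mod_right]; exact hm3⟩
  · have key : archJump u hu i ≤ archJump u hu (i + u.length) - u.length := by
      refine archJump_min u hu _ _ (by omega) (fun a => ?_)
      obtain ⟨m, hm1, hm2, hm3⟩ := h2' a
      refine ⟨m - u.length, by omega, by omega, ?_⟩
      have : m - u.length + u.length = m := by omega
      rw [← hm3, ← this]
      simp [omegaWord, Nat.add_mod_right]
    omega

lemma archJump_shift_mul (u : List A) (hu : u ≠ []) (hA : ∀ a : A, a ∈ u) (i c : ℕ) :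
    archJump u hu (i + c * u.length) = archJump u hu i + c * u.length := by
  induction c with
  | zero => simp
  | succ c ih =>
      have : i + (c + 1) * u.length = (i + c * u.length) + u.length := by ring
      rw [this, archJump_shift u hu hA, ih]; ring

lemma archJump_modEq (u : List A) (hu : u ≠ []) (hA : ∀ a : A, a ∈ u) {i j : ℕ}
    (h : i ≡ j [MOD u.length]) : archJump u hu i ≡ archJump u hu j [MOD u.length] := by
  rcases le_total i j with hle | hle
  · obtain ⟨c, hc⟩ := (Nat.modEq_iff_dvd' hle).mp h
    have : j = i + c * u.length := by rw [Nat.mul_comm]; omega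
    rw [this, archJump_shift_mul u hu hA]
    exact (Nat.modEq_iff_dvd' (Nat.le_add_right _ _)).mpr ⟨c, by omega⟩
  · obtain ⟨c, hc⟩ := (Nat.modEq_iff_dvd' hle).mp h.symm
    have : i = j + c * u.length := by rw [Nat.mul_comm]; omega
    rw [this, archJump_shift_mul u hu hA]
    exact ((Nat.modEq_iff_dvd' (Nat.le_add_right _ _)).mpr ⟨c, by omega⟩).symm

lemma iter_modEq (u : List A) (hu : u ≠ []) (hA : ∀ a : A, a ∈ u) {x y : ℕ}
    (h : (archJump u hu)^[x] 0 ≡ (archJump u hu)^[y] 0 [MOD u.length]) (d : ℕ) :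
    (archJump u hu)^[x + d] 0 ≡ (archJump u hu)^[y + d] 0 [MOD u.length] := by
  induction d with
  | zero => simpa using h
  | succ d ih =>
      have e1 : x + (d + 1) = (x + d) + 1 := by ring
      have e2 : y + (d + 1) = (y + d) + 1 := by ring
      rw [e1, e2, Function.iterate_succ_apply', Function.iterate_succ_apply']
      exact archJump_modEq u hu hA ih

lemma iter_lt_succ (u : List A) (hu : u ≠ []) (hA : ∀ a : A, a ∈ u) (k : ℕ) :
    (archJump u hu)^[k] 0 < (archJump u hu)^[k + 1] 0 := by
  rw [Function.iterate_succ_apply']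
  exact (archJump_mem u hu hA _).1

lemma iter_mono (u : List A) (hu : u ≠ []) (hA : ∀ a : A, a ∈ u) :
    StrictMono (fun k => (archJump u hu)^[k] 0) :=
  strictMono_nat_of_lt_succ (iter_lt_succ u hu hA)

lemma iter_succ_le (u : List A) (hu : u ≠ []) (hA : ∀ a : A, a ∈ u) (k : ℕ) :
    (archJump u hu)^[k + 1] 0 ≤ (archJump u hu)^[k] 0 + u.length := by
  rw [Function.iterate_succ_apply']
  exact archJump_le u hu hA _

lemma complete_letter (u : List A) (hu : u ≠ []) (hA : ∀ a : A, a ∈ u) (i : ℕ) :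
    ∀ p, i ≤ p → p < archJump u hu i - 1 →
      omegaWord u hu p ≠ omegaWord u hu (archJump u hu i - 1) := by
  intro p hip hp habs
  obtain ⟨h1, h2⟩ := archJump_mem u hu hA i
  have hmin : archJump u hu i ≤ archJump u hu i - 1 := by
    refine archJump_min u hu _ _ (by omega) (fun b => ?_)
    obtain ⟨m, hm1, hm2, hm3⟩ := h2 b
    rcases Nat.lt_or_ge m (archJump u hu i - 1) with hm | hm
    · exact ⟨m, hm1, hm, hm3⟩
    · have : m = archJump u hu i - 1 := by omega
      exact ⟨p, hip, hp, by rw [habs, ← this, hm3]⟩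
  omega

lemma omega_add_mul (u : List A) (hu : u ≠ []) (y c : ℕ) :
    omegaWord u hu (y + u.length * c) = omegaWord u hu y := by
  induction c with
  | zero => simp
  | succ c ih =>
      have : y + u.length * (c + 1) = (y + u.length * c) + u.length := by ring
      rw [this]
      simp only [omegaWord, Nat.add_mod_right]
      exact ih

lemma wrap_res (u : List A) (hu : u ≠ []) (hA : ∀ a : A, a ∈ u) (i : ℕ)
    (h : (i / u.length + 1) * u.length < archJump u hu i) :
    ∃ x, archJump u hu i % u.length = x + 1 ∧ x + 1 < u.length ∧
      omegaWord u hu x = omegaWord u hu (archJump u hu i - 1) ∧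
      ∀ y < x, omegaWord u hu y ≠ omegaWord u hu x := by
  have hLpos : 0 < u.length := List.length_pos_iff.mpr hu
  set L := u.length with hLdef
  set J := archJump u hu i with hJdef
  have hJle : J ≤ i + L := archJump_le u hu hA i
  have hdm := Nat.div_add_mod i L
  have hml := Nat.mod_lt i hLpos
  obtain ⟨Q, hQ⟩ : ∃ Q, L * (i / L + 1) = Q := ⟨_, rfl⟩
  have hQ1 : (i / L + 1) * L = Q := by rw [← hQ]; ring
  have hQ2 : L * (i / L) + L = Q := by rw [← hQ]; ring
  set x := J - 1 - Q with hx
  have hiQ : Q ≤ i + L ∧ i < Q := by omega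
  have hxL : x + 1 < L := by omega
  have hJeq : J - 1 = x + Q := by omega
  have hmodJ : J % L = x + 1 := by
    have : J = (x + 1) + (i / L + 1) * L := by omega
    rw [this, Nat.add_mul_mod_self_right, Nat.mod_eq_of_lt hxL]
  have ex : omegaWord u hu (x + Q) = omegaWord u hu x := by
    rw [← hQ]; exact omega_add_mul u hu x _
  refine ⟨x, hmodJ, hxL, ?_, ?_⟩
  · rw [← hJeq] at ex; exact ex.symm
  · intro y hy habs
    have ey : omegaWord u hu (y + Q) = omegaWord u hu y := by
      rw [← hQ]; exact omega_add_mul u hu y _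
    refine complete_letter u hu hA i (y + Q) (by omega) (by omega) ?_
    rw [ey, habs, ← hJeq] at *
    rw [ey, habs]
    rw [← ex, hJeq]

lemma wrap_res0 (u : List A) (hu : u ≠ []) (hA : ∀ a : A, a ∈ u)
    (_h : archJump u hu 0 < u.length) :
    ∃ x, archJump u hu 0 = x + 1 ∧
      ∀ y < x, omegaWord u hu y ≠ omegaWord u hu x := by
  have h1 := (archJump_mem u hu hA 0).1
  refine ⟨archJump u hu 0 - 1, by omega, fun y hy habs => ?_⟩
  exact complete_letter u hu hA 0 y (by omega) (by omega) habs

noncomputable def archIter (u : List A) (hu : u ≠ []) (k : ℕ) : ℕ := (archJump u hu)^[k] 0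

lemma archIter_succ (u : List A) (hu : u ≠ []) (k : ℕ) :
    archIter u hu (k + 1) = archJump u hu (archIter u hu k) := by
  simp [archIter, Function.iterate_succ_apply']

lemma div_step (u : List A) (hu : u ≠ []) (hA : ∀ a : A, a ∈ u) (k : ℕ) :
    archIter u hu (k + 1) / u.length ≤ archIter u hu k / u.length + 1 := by
  have h := iter_succ_le u hu hA k
  have : archIter u hu (k + 1) ≤ archIter u hu k + u.length := h
  calc archIter u hu (k + 1) / u.length ≤ (archIter u hu k + u.length) / u.length :=
        Nat.div_le_div_right this
    _ = archIter u hu k / u.length + 1 :=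
        Nat.add_div_right _ (List.length_pos_iff.mpr hu)

lemma div_mono (u : List A) (hu : u ≠ []) (hA : ∀ a : A, a ∈ u) {j k : ℕ} (h : j ≤ k) :
    archIter u hu j / u.length ≤ archIter u hu k / u.length :=
  Nat.div_le_div_right ((iter_mono u hu hA).le_iff_le.mpr h)

lemma div_le_card_wraps (u : List A) (hu : u ≠ []) (hA : ∀ a : A, a ∈ u) (m : ℕ) :
    archIter u hu m / u.length ≤
      ((Finset.range m).filter
        (fun k => archIter u hu k / u.length < archIter u hu (k + 1) / u.length)).card := by
  induction m with
  | zero => simp [archIter]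
  | succ m ih =>
      rw [Finset.range_add_one, Finset.filter_insert]
      by_cases hw : archIter u hu m / u.length < archIter u hu (m + 1) / u.length
      · rw [if_pos hw, Finset.card_insert_of_notMem (by simp)]
        have := div_step u hu hA m
        omega
      · rw [if_neg hw]
        have : archIter u hu (m + 1) / u.length ≤ archIter u hu m / u.length := by omega
        omega

lemma wrap_letter (u : List A) (hu : u ≠ []) (hA : ∀ a : A, a ∈ u) (k : ℕ)
    (hwrap : archIter u hu k / u.length < archIter u hu (k + 1) / u.length)
    (hmod : archIter u hu (k + 1) % u.length ≠ 0) :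
    ∃ x, archIter u hu (k + 1) % u.length = x + 1 ∧
      ∀ y < x, omegaWord u hu y ≠ omegaWord u hu x := by
  have hLpos : 0 < u.length := List.length_pos_iff.mpr hu
  set L := u.length
  have h1 : (archIter u hu k / L + 1) * L ≤ archIter u hu (k + 1) := by
    calc (archIter u hu k / L + 1) * L ≤ (archIter u hu (k+1) / L) * L :=
          Nat.mul_le_mul_right _ (by omega)
      _ ≤ archIter u hu (k+1) := Nat.div_mul_le_self _ _
  have h2 : (archIter u hu k / L + 1) * L < archIter u hu (k + 1) := by
    rcases lt_or_eq_of_le h1 with h | h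
    · exact h
    · exfalso; apply hmod; rw [← h]; simp [Nat.mul_mod_left]
  rw [archIter_succ] at h2 hmod ⊢
  obtain ⟨x, hx1, _, _, hx4⟩ := wrap_res u hu hA (archIter u hu k) h2
  exact ⟨x, hx1, hx4⟩

lemma main_bound (u : List A) [Fintype A] (hu : u ≠ []) (hA : ∀ a : A, a ∈ u) :
    ∃ j k : ℕ, j < k ∧ archIter u hu j ≡ archIter u hu k [MOD u.length] ∧
      archIter u hu k ≤ (Fintype.card A + 1) * u.length := by
  classical
  have hLpos : 0 < u.length := List.length_pos_iff.mpr hu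
  set L := u.length with hLdef
  set n := archIter u hu with hndef
  -- pigeonhole: some repeat exists
  have hRne : ∃ k, ∃ j, j < k ∧ n j ≡ n k [MOD L] := by
    have hmaps : ∀ k ∈ Finset.range (L + 1), n k % L ∈ Finset.range L := by
      intro k _; simp [Nat.mod_lt _ hLpos]
    obtain ⟨x, hx, y, hy, hxy, hfxy⟩ :=
      Finset.exists_ne_map_eq_of_card_lt_of_maps_to (by simp) hmaps
    rcases Nat.lt_or_ge x y with h | h
    · exact ⟨y, x, h, hfxy⟩
    · exact ⟨x, y, by omega, hfxy.symm⟩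
  set R := {k : ℕ | ∃ j, j < k ∧ n j ≡ n k [MOD L]} with hRdef
  have hRne' : R.Nonempty := by obtain ⟨k, hk⟩ := hRne; exact ⟨k, hk⟩
  set m := sInf R with hmdef
  obtain ⟨j₀, hj₀m, hj₀⟩ : ∃ j, j < m ∧ n j ≡ n m [MOD L] := Nat.sInf_mem hRne'
  have Rinj : ∀ j k, j < k → k < m → ¬ (n j ≡ n k [MOD L]) := by
    intro j k hjk hkm hcong
    have : m ≤ k := Nat.sInf_le ⟨j, hjk, hcong⟩
    omega
  have hm1 : 1 ≤ m := by omega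
  have hn0 : n 0 = 0 := rfl
  have hnz : ∀ k, 1 ≤ k → k < m → n k % L ≠ 0 := by
    intro k h1 h2 h0
    exact Rinj 0 k h1 h2 (by unfold Nat.ModEq; rw [hn0, h0]; simp)
  set N := Fintype.card A with hNdef
  set T := (Finset.range m).filter (fun k => n k / L < n (k + 1) / L) with hTdef
  set T' := T.erase (m - 1) with hT'def
  -- the letter map
  set g : ℕ → A := fun k => omegaWord u hu (n (k + 1) % L - 1) with hgdef
  have hT'mem : ∀ k ∈ T', k < m - 1 ∧ n k / L < n (k + 1) / L := by
    intro k hk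
    rw [hT'def, Finset.mem_erase, hTdef, Finset.mem_filter, Finset.mem_range] at hk
    exact ⟨by omega, hk.2.2⟩
  have hT'x : ∀ k ∈ T', n (k + 1) % L ≠ 0 ∧
      ∀ y < n (k + 1) % L - 1, omegaWord u hu y ≠ omegaWord u hu (n (k + 1) % L - 1) := by
    intro k hk
    obtain ⟨hkm, hw⟩ := hT'mem k hk
    have hmod : n (k + 1) % L ≠ 0 := hnz (k + 1) (by omega) (by omega)
    obtain ⟨x, hx1, hx2⟩ := wrap_letter u hu hA k hw hmod
    have hx1' : n (k + 1) % L = x + 1 := hx1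
    have : x = n (k + 1) % L - 1 := by omega
    exact ⟨hmod, this ▸ hx2⟩
  have hginj : Set.InjOn g ↑T' := by
    intro k hk k' hk' hg
    by_contra hne
    obtain ⟨hmod, hmin⟩ := hT'x k hk
    obtain ⟨hmod', hmin'⟩ := hT'x k' hk'
    obtain ⟨hkm, _⟩ := hT'mem k hk
    obtain ⟨hkm', _⟩ := hT'mem k' hk'
    have hxx : n (k + 1) % L - 1 = n (k' + 1) % L - 1 := by
      rcases Nat.lt_trichotomy (n (k + 1) % L - 1) (n (k' + 1) % L - 1) with h | h | h
      · exact absurd hg (hmin' _ h)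
      · exact h
      · exact absurd hg.symm (hmin _ h)
    have hcong : n (k + 1) ≡ n (k' + 1) [MOD L] := by
      unfold Nat.ModEq; omega
    rcases Nat.lt_trichotomy k k' with h | h | h
    · exact Rinj (k + 1) (k' + 1) (by omega) (by omega) hcong
    · exact hne h
    · exact Rinj (k' + 1) (k + 1) (by omega) (by omega) hcong.symm
  have hT'card : T'.card ≤ N := by
    have := Finset.card_le_card_of_injOn g (fun k _ => Finset.mem_univ (g k)) hginj
    simpa [hNdef] using this
  have hDiv : n m / L ≤ T.card := div_le_card_wraps u hu hA m
  have hTbr : T'.card = (T.erase (m - 1)).card := rfl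
  have hTcard : T.card ≤ T'.card + 1 := by
    rw [hTbr]
    have h1 := Finset.card_erase_of_mem (s := T) (a := m - 1)
    have h2 := Finset.card_le_card (Finset.erase_subset (m - 1) T)
    by_cases h : (m - 1) ∈ T
    · have := h1 h; omega
    · rw [Finset.erase_eq_of_notMem h]; omega
  have hdm := Nat.div_add_mod (n m) L
  have hmodlt : n m % L < L := Nat.mod_lt _ hLpos
  -- final case analysis
  refine ⟨j₀, m, hj₀m, hj₀, ?_⟩
  by_cases hlast : (m - 1) ∈ T
  · by_cases hr : n m % L = 0
    · -- n m = L * (n m / L), div ≤ N + 1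
      have h6 : n m / L ≤ N + 1 := by omega
      have h7 : n m ≤ L * (N + 1) := by
        calc n m = L * (n m / L) := by omega
          _ ≤ L * (N + 1) := Nat.mul_le_mul_left _ h6
      calc n m ≤ L * (N + 1) := h7
        _ = (N + 1) * L := Nat.mul_comm _ _
    · -- show T'.card ≤ N - 1 via missing letter a₀
      -- first, 0 ∉ T
      have h0T : 0 ∉ T := by
        intro h0
        rw [hTdef, Finset.mem_filter] at h0
        have hw : n 0 / L < n 1 / L := h0.2
        have hw2 : 1 ≤ n 1 / L := by
          have : n 0 / L = 0 := by rw [hn0]; simp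
          omega
        have h1 : L ≤ n 1 := by
          have := (Nat.le_div_iff_mul_le hLpos).mp hw2
          omega
        have h2 : n 1 ≤ L := by
          have := iter_succ_le u hu hA 0
          simp at this; exact this
        have h4 : n 1 % L = 0 := by
          have : n 1 = L := by omega
          rw [this]; simp
        rcases Nat.lt_or_ge 1 m with h | h
        · exact hnz 1 le_rfl h h4
        · -- m = 1, so m - 1 = 0 ∈ T and n m % L = n 1 % L = 0, contradicting hr
          have : m = 1 := by omega
          rw [this] at hr; exact hr h4
      have hm2 : 2 ≤ m := by
        rcases Nat.lt_or_ge m 2 with h | h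
        · exfalso; have : m = 1 := by omega
          rw [this] at hlast; simp at hlast; exact h0T hlast
        · exact h
      have hn1L : n 1 < L := by
        have h2 : n 1 ≤ L := by
          have := iter_succ_le u hu hA 0
          simp at this; exact this
        rcases lt_or_eq_of_le h2 with h | h
        · exact h
        · exfalso; exact hnz 1 le_rfl (by omega) (by rw [h]; simp)
      obtain ⟨x₀, hx₀1, hx₀2⟩ := wrap_res0 u hu hA (show archJump u hu 0 < u.length from hn1L)
      have hx₀1' : n 1 = x₀ + 1 := hx₀1
      set a₀ := omegaWord u hu x₀ with ha₀
      have hga : ∀ k ∈ T', g k ≠ a₀ := by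
        intro k hk hgk
        obtain ⟨hmod, hmin⟩ := hT'x k hk
        obtain ⟨hkm, _⟩ := hT'mem k hk
        have hxx : n (k + 1) % L - 1 = x₀ := by
          rcases Nat.lt_trichotomy (n (k + 1) % L - 1) x₀ with h | h | h
          · exact absurd hgk (hx₀2 _ h)
          · exact h
          · exact absurd hgk.symm (hmin _ h)
        have hcong : n (k + 1) ≡ n 1 [MOD L] := by
          unfold Nat.ModEq
          have h9 : n 1 % L = n 1 := Nat.mod_eq_of_lt hn1L
          omega
        have hk0 : k ≠ 0 := by
          intro h; rw [h] at hk
          exact h0T (Finset.mem_of_mem_erase hk)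
        exact Rinj 1 (k + 1) (by omega) (by omega) hcong.symm
      have hT'card2 : T'.card ≤ N - 1 := by
        have hmaps : ∀ k ∈ T', g k ∈ Finset.univ.erase a₀ := by
          intro k hk
          exact Finset.mem_erase.mpr ⟨hga k hk, Finset.mem_univ _⟩
        have := Finset.card_le_card_of_injOn g hmaps hginj
        rw [Finset.card_erase_of_mem (Finset.mem_univ _)] at this
        simpa [hNdef] using this
      have hN1 : 1 ≤ N := @Fintype.card_pos _ _ ⟨a₀⟩
      have hdivN : n m / L ≤ N := by omega
      have h8 : n m ≤ L * N + (L - 1) := by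
        have := Nat.mul_le_mul_left L hdivN
        omega
      calc n m ≤ L * N + (L - 1) := h8
        _ ≤ L * N + L := by omega
        _ = (N + 1) * L := by ring
  · -- m - 1 ∉ T so T = T'
    have hTT' : T.card = T'.card := by
      rw [hTbr, Finset.erase_eq_of_notMem hlast]
    have h4 : n m / L ≤ N := by omega
    have h5 := Nat.mul_le_mul_left L h4
    have h6 : n m ≤ L * N + (L - 1) := by omega
    calc n m ≤ L * N + (L - 1) := h6
      _ ≤ L * N + L := by omega
      _ = (N + 1) * L := by ring

theorem stmt18' {A : Type*} [Fintype A] (u : List A) (hu : u ≠ [])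
    (hA : ∀ a : A, a ∈ u) :
    archIter u hu (archTransientIndex u hu) +
      (archIter u hu (archTransientIndex u hu + archPeriod u hu) -
        archIter u hu (archTransientIndex u hu)) ≤ (Fintype.card A + 1) * u.length := by
  classical
  set L := u.length with hLdef
  set n := archIter u hu with hndef
  obtain ⟨j, k, hjk, hcong, hbound⟩ := main_bound u hu hA
  set q := k - j with hqdef
  have hq1 : 1 ≤ q := by omega
  have hkq : j + q = k := by omega
  have hmemq : IsArchPeriodAt u hu 0 q := by
    refine ⟨by omega, j, ?_⟩
    show n (j + q) ≡ n j [MOD L]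
    rw [hkq]; exact hcong.symm
  set P := archPeriod u hu with hPdef
  have hPle : P ≤ q := Nat.sInf_le hmemq
  have hPmem : IsArchPeriodAt u hu 0 P := Nat.sInf_mem (⟨q, hmemq⟩ : Set.Nonempty {p | IsArchPeriodAt u hu 0 p})
  obtain ⟨hP0, k₁, hk₁⟩ := hPmem
  have hk₁' : n (k₁ + P) ≡ n k₁ [MOD L] := hk₁
  -- n (j + b*q) ≡ n j for all b
  have hmul : ∀ b, n (j + b * q) ≡ n j [MOD L] := by
    intro b
    induction b with
    | zero => simp [Nat.ModEq.refl]
    | succ b ih =>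
        have h1 : n (j + b * q + q) ≡ n (j + q) [MOD L] := iter_modEq u hu hA ih q
        have h2 : j + (b + 1) * q = j + b * q + q := by ring
        rw [h2]
        exact h1.trans (by rw [hkq]; exact hcong.symm)
  -- j is in the transient set
  have hjmem : n (j + P) ≡ n j [MOD L] := by
    have hB := hmul k₁
    have hge : k₁ ≤ j + k₁ * q := by
      calc k₁ = k₁ * 1 := by ring
        _ ≤ k₁ * q := Nat.mul_le_mul_left _ hq1
        _ ≤ j + k₁ * q := by omega
    obtain ⟨d, hd⟩ : ∃ d, j + k₁ * q = k₁ + d := ⟨j + k₁ * q - k₁, by omega⟩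
    have h1 : n (j + P) ≡ n (j + k₁ * q + P) [MOD L] := iter_modEq u hu hA hB.symm P
    have h2 : n (j + k₁ * q + P) ≡ n (j + k₁ * q) [MOD L] := by
      have := iter_modEq u hu hA hk₁' d
      have e1 : k₁ + P + d = j + k₁ * q + P := by omega
      have e2 : k₁ + d = j + k₁ * q := by omega
      rw [e1, e2] at this
      exact this
    exact (h1.trans h2).trans hB
  have hKle : archTransientIndex u hu ≤ j := Nat.sInf_le hjmem
  set K := archTransientIndex u hu with hKdef
  have hKP : K + P ≤ k := by omega
  have hmono := iter_mono u hu hA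
  have h1 : n (K + P) ≤ n k := hmono.le_iff_le.mpr hKP
  have h2 : n K ≤ n (K + P) := hmono.le_iff_le.mpr (by omega)
  have : n K + (n (K + P) - n K) = n (K + P) := by omega
  rw [this]
  exact le_trans h1 hbound


/-- bounding transient plus span: `T_u + Δ_u ≤ (|A| + 1)·L`. -/
theorem stmt18 {A : Type*} [Fintype A] (u : List A) (hu : u ≠ [])
    (hA : ∀ a : A, a ∈ u) :
    archTransient u hu + archSpan u hu ≤ (Fintype.card A + 1) * u.length :=
  stmt18' u hu hA
end
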